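/- arXiv:1612.03022 — 4 statements merged into one kernel-verified Lean document; each statement's English description precedes it below -/
import Mathlib

section
/- Let X be a metric space, ℓ ≥ 0 a real number, ε > 0, and let γ : [0,1] → X be a continuous path whose total variation satisfies eVariationOn γ [0,1] ≤ ℓ. Set N = max(⌈ℓ/ε⌉, 1). Then there exist real numbers 0 = t₀ ≤ t₁ ≤ ⋯ ≤ t_N = 1 such that for every 0 ≤ i < N the set γ([tᵢ, tᵢ₊₁]) has diameter at most ε. -/
open Set Filter Topology

/-- A continuous path of length at most `ℓ` in a metric space can be subdivided into
`N = max ⌈ℓ/ε⌉ 1` subsegments each of whose images has diameter at most `ε`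
(the metric content of Proposition 2.3 of Hurder–Walczak). -/
theorem stmt3 {X : Type*} [MetricSpace X] (ℓ ε : ℝ) (hℓ : 0 ≤ ℓ) (hε : 0 < ε)
    (γ : ℝ → X) (hγ : ContinuousOn γ (Set.Icc 0 1))
    (hvar : eVariationOn γ (Set.Icc 0 1) ≤ ENNReal.ofReal ℓ) :
    ∃ t : ℕ → ℝ, t 0 = 0 ∧ t (max ⌈ℓ / ε⌉₊ 1) = 1 ∧
      (∀ i j : ℕ, i ≤ j → j ≤ max ⌈ℓ / ε⌉₊ 1 → t i ≤ t j) ∧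
      (∀ i : ℕ, i < max ⌈ℓ / ε⌉₊ 1 →
        Metric.diam (γ '' Set.Icc (t i) (t (i + 1))) ≤ ε) := by
  set N : ℕ := max ⌈ℓ / ε⌉₊ 1 with hNdef
  have hN1 : 1 ≤ N := le_max_right _ _
  have hNpos : (0:ℝ) < N := by exact_mod_cast hN1
  set e : ℝ := ℓ / N with hedef
  have he0 : 0 ≤ e := div_nonneg hℓ hNpos.le
  have heε : e ≤ ε := by
    rw [hedef, div_le_iff₀ hNpos]
    calc ℓ = (ℓ / ε) * ε := by field_simp
      _ ≤ (⌈ℓ / ε⌉₊ : ℝ) * ε := by gcongr; exact Nat.le_ceil _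
      _ ≤ (N:ℝ) * ε := by gcongr; exact_mod_cast le_max_left _ _
      _ = ε * N := mul_comm _ _
  have hNe : (N:ℝ) * e = ℓ := by
    rw [hedef]; field_simp
  have htot : eVariationOn γ (Icc (0:ℝ) 1) ≠ ⊤ := (hvar.trans_lt ENNReal.ofReal_lt_top).ne
  have hfin : ∀ s u : ℝ, 0 ≤ s → u ≤ 1 → eVariationOn γ (Icc s u) ≠ ⊤ := fun s u hs hu =>
    ((eVariationOn.mono γ (Icc_subset_Icc hs hu)).trans_lt
      (lt_top_iff_ne_top.mpr htot)).ne
  set v : ℝ → ℝ := fun t => (eVariationOn γ (Icc 0 t)).toReal with hvdef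
  have hv0 : v 0 = 0 := by
    have : eVariationOn γ (Icc (0:ℝ) 0) = 0 :=
      eVariationOn.subsingleton γ (by simp [Set.Icc_self])
    simp [hvdef, this]
  have hvnn : ∀ s, 0 ≤ v s := fun s => ENNReal.toReal_nonneg
  have hvmono : ∀ {s u : ℝ}, 0 ≤ s → s ≤ u → u ≤ 1 → v s ≤ v u := by
    intro s u hs hsu hu
    exact ENNReal.toReal_mono (hfin 0 u le_rfl hu)
      (eVariationOn.mono γ (Icc_subset_Icc_right hsu))
  have hv1 : v 1 ≤ ℓ := ENNReal.toReal_le_of_le_ofReal hℓ hvar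
  have hadd : ∀ {s u : ℝ}, 0 ≤ s → s ≤ u → u ≤ 1 →
      (eVariationOn γ (Icc s u)).toReal = v u - v s := by
    intro s u hs hsu hu
    have h := eVariationOn.Icc_add_Icc γ (s := (univ : Set ℝ)) hs hsu (mem_univ s)
    simp only [univ_inter] at h
    have h1 := hfin 0 s le_rfl (hsu.trans hu)
    have h2 := hfin s u hs hu
    have : v u = v s + (eVariationOn γ (Icc s u)).toReal := by
      rw [hvdef]; dsimp only; rw [← h, ENNReal.toReal_add h1 h2]
    linarith
  set S : ℕ → Set ℝ := fun i => {s ∈ Icc (0:ℝ) 1 | v s ≤ (i:ℝ) * e} with hSdef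
  have hS0 : ∀ i, (0:ℝ) ∈ S i := fun i =>
    ⟨⟨le_rfl, zero_le_one⟩, by rw [hv0]; exact mul_nonneg (Nat.cast_nonneg i) he0⟩
  have hSbdd : ∀ i, BddAbove (S i) := fun i => ⟨1, fun s hs => hs.1.2⟩
  have hSsub : ∀ {i j : ℕ}, i ≤ j → S i ⊆ S j := by
    intro i j hij s hs
    exact ⟨hs.1, hs.2.trans (mul_le_mul_of_nonneg_right (by exact_mod_cast hij) he0)⟩
  set t : ℕ → ℝ := fun i => if i = 0 then 0 else if N ≤ i then 1 else sSup (S i) with htdef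
  have ht0 : t 0 = 0 := by simp [htdef]
  have htN : ∀ i, i ≠ 0 → N ≤ i → t i = 1 := by
    intro i h1 h2; simp [htdef, h1, h2]
  have htS : ∀ i, i ≠ 0 → ¬ N ≤ i → t i = sSup (S i) := by
    intro i h1 h2; simp [htdef, h1, h2]
  have htmem : ∀ i, t i ∈ Icc (0:ℝ) 1 := by
    intro i
    rcases eq_or_ne i 0 with h0 | h0
    · rw [h0, ht0]; exact ⟨le_rfl, zero_le_one⟩
    rcases le_or_gt N i with h1 | h1
    · rw [htN i h0 h1]; exact ⟨zero_le_one, le_rfl⟩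
    · rw [htS i h0 (not_le.mpr h1)]
      exact ⟨le_csSup (hSbdd i) (hS0 i), csSup_le ⟨0, hS0 i⟩ fun x hx => hx.1.2⟩
  have htmono : ∀ i j : ℕ, i ≤ j → j ≤ N → t i ≤ t j := by
    intro i j hij hjN
    rcases eq_or_ne i 0 with h0 | h0
    · rw [h0, ht0]; exact (htmem j).1
    rcases le_or_gt N j with h1 | h1
    · rw [htN j (by omega) h1]; exact (htmem i).2
    · rw [htS i h0 (by omega), htS j (by omega) (not_le.mpr h1)]
      exact csSup_le_csSup (hSbdd j) ⟨0, hS0 i⟩ (hSsub hij)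
  -- lower bound on `v` to the right of `t i`
  have hCL : ∀ i : ℕ, i < N → ∀ s, s ∈ Icc (0:ℝ) 1 → t i < s → (i:ℝ) * e ≤ v s := by
    intro i hiN s hs hts
    rcases eq_or_ne i 0 with h0 | h0
    · rw [h0]; simpa using hvnn s
    · rw [htS i h0 (not_le.mpr hiN)] at hts
      by_contra hcon
      push_neg at hcon
      have hmem : s ∈ S i := ⟨hs, hcon.le⟩
      exact absurd (le_csSup (hSbdd i) hmem) (not_le.mpr hts)
  -- upper bound on `v` to the left of `t (i+1)` when `i+1 < N`
  have hCU : ∀ i : ℕ, i + 1 < N → ∀ u, u ∈ Icc (0:ℝ) 1 → u < t (i+1) →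
      v u ≤ ((i:ℝ) + 1) * e := by
    intro i hiN u hu hub
    rw [htS (i+1) (by omega) (not_le.mpr hiN)] at hub
    obtain ⟨w, hw, huw⟩ := exists_lt_of_lt_csSup ⟨0, hS0 (i+1)⟩ hub
    have : v u ≤ v w := hvmono hu.1 huw.le hw.1.2
    refine this.trans ?_
    have := hw.2
    push_cast at this ⊢
    linarith
  refine ⟨t, ht0, htN N (by omega) le_rfl, htmono, ?_⟩
  intro i hiN
  -- everything about segment i
  have hab : t i ≤ t (i+1) := htmono i (i+1) (by omega) (by omega)
  have ha01 := htmem i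
  have hb01 := htmem (i+1)
  have htop : ∀ u, u ∈ Icc (0:ℝ) 1 → i + 1 = N → v u ≤ ((i:ℝ) + 1) * e := by
    intro u hu h
    have h2 : ((i:ℝ) + 1) = (N:ℝ) := by exact_mod_cast h
    rw [h2, hNe]
    exact (hvmono hu.1 hu.2 le_rfl).trans hv1
  have hCU' : ∀ u, u ∈ Icc (0:ℝ) 1 → (u < t (i+1) ∨ i + 1 = N) → v u ≤ ((i:ℝ) + 1) * e := by
    intro u hu hc
    rcases hc with hlt | heq
    · rcases lt_or_ge (i+1) N with h | h
      · exact hCU i h u hu hlt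
      · exact htop u hu (le_antisymm hiN h)
    · exact htop u hu heq
  have L : ∀ s u : ℝ, s ∈ Icc (0:ℝ) 1 → u ∈ Icc (0:ℝ) 1 → s ≤ u →
      (i:ℝ) * e ≤ v s → v u ≤ ((i:ℝ) + 1) * e → dist (γ s) (γ u) ≤ e := by
    intro s u hs hu hsu h1 h2
    have hb : BoundedVariationOn γ (Icc s u) := hfin s u hs.1 hu.2
    have hd := hb.dist_le (x := s) (y := u) ⟨le_rfl, hsu⟩ ⟨hsu, le_rfl⟩
    rw [hadd hs.1 hsu hu.2] at hd
    linarith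
  have key : ∀ x ∈ Icc (t i) (t (i+1)), ∀ y ∈ Icc (t i) (t (i+1)), x ≤ y →
      dist (γ x) (γ y) ≤ e := by
    intro x hx y hy hxy
    have hx01 : x ∈ Icc (0:ℝ) 1 := ⟨ha01.1.trans hx.1, hx.2.trans hb01.2⟩
    have hy01 : y ∈ Icc (0:ℝ) 1 := ⟨ha01.1.trans hy.1, hy.2.trans hb01.2⟩
    rcases eq_or_lt_of_le hxy with rfl | hxy'
    · simpa using he0
    set m : ℝ := (x + y) / 2 with hmdef
    have hxm : x < m := by rw [hmdef]; linarith
    have hmy : m < y := by rw [hmdef]; linarith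
    have hm1 : m ≤ 1 := hmy.le.trans hy01.2
    refine le_of_forall_pos_le_add ?_
    intro δ hδ
    -- pick s close to x on its right, strictly above t i
    obtain ⟨s, hs01, hsm, has, hds⟩ :
        ∃ s, s ∈ Icc (0:ℝ) 1 ∧ s ≤ m ∧ t i < s ∧ dist (γ s) (γ x) ≤ δ / 2 := by
      rcases eq_or_lt_of_le hx.1 with h | h
      · -- x = t i : use continuity
        have hc : ContinuousWithinAt γ (Icc 0 1) x := hγ x hx01
        have hsub : Ioc x m ⊆ Icc (0:ℝ) 1 := fun z hz => ⟨hx01.1.trans hz.1.le, hz.2.trans hm1⟩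
        have hne : (𝓝[Ioc x m] x).NeBot := left_nhdsWithin_Ioc_neBot hxm
        have h1 : Tendsto γ (𝓝[Ioc x m] x) (𝓝 (γ x)) := hc.mono_left (nhdsWithin_mono _ hsub)
        have h2 : ∀ᶠ z in 𝓝[Ioc x m] x, dist (γ z) (γ x) ≤ δ / 2 := by
          have := h1 (Metric.closedBall_mem_nhds (γ x) (half_pos hδ))
          filter_upwards [this] with z hz using hz
        obtain ⟨z, hz, hzd⟩ := (eventually_mem_nhdsWithin.and h2).exists
        exact ⟨z, hsub hz, hz.2, h ▸ hz.1, hzd⟩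
      · exact ⟨x, hx01, hxm.le, h, by rw [dist_self]; linarith⟩
    -- pick u close to y on its left
    obtain ⟨u, hu01, hmu, hub, hdu⟩ :
        ∃ u, u ∈ Icc (0:ℝ) 1 ∧ m ≤ u ∧ (u < t (i+1) ∨ i + 1 = N) ∧
          dist (γ u) (γ y) ≤ δ / 2 := by
      rcases eq_or_lt_of_le hy.2 with h | h
      · rcases eq_or_lt_of_le (Nat.succ_le_of_lt hiN) with hN' | hN'
        · exact ⟨y, hy01, hmy.le, Or.inr hN', by rw [dist_self]; linarith⟩
        · -- y = t (i+1), i+1 < N : use continuity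
          have hc : ContinuousWithinAt γ (Icc 0 1) y := hγ y hy01
          have hsub : Ico m y ⊆ Icc (0:ℝ) 1 := fun z hz =>
            ⟨(hxm.le.trans hz.1).trans' hx01.1, hz.2.le.trans hy01.2⟩
          have hne : (𝓝[Ico m y] y).NeBot := right_nhdsWithin_Ico_neBot hmy
          have h1 : Tendsto γ (𝓝[Ico m y] y) (𝓝 (γ y)) := hc.mono_left (nhdsWithin_mono _ hsub)
          have h2 : ∀ᶠ z in 𝓝[Ico m y] y, dist (γ z) (γ y) ≤ δ / 2 := by
            have := h1 (Metric.closedBall_mem_nhds (γ y) (half_pos hδ))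
            filter_upwards [this] with z hz using hz
          obtain ⟨z, hz, hzd⟩ := (eventually_mem_nhdsWithin.and h2).exists
          exact ⟨z, hsub hz, hz.1, Or.inl (h ▸ hz.2), hzd⟩
      · exact ⟨y, hy01, hmy.le, Or.inl h, by rw [dist_self]; linarith⟩
    have hsu : s ≤ u := hsm.trans hmu
    have hvs := hCL i hiN s hs01 has
    have hvu := hCU' u hu01 hub
    have hmid := L s u hs01 hu01 hsu hvs hvu
    calc dist (γ x) (γ y)
        ≤ dist (γ x) (γ s) + dist (γ s) (γ u) + dist (γ u) (γ y) := dist_triangle4 _ _ _ _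
      _ ≤ δ / 2 + e + δ / 2 := by
          rw [dist_comm (γ x) (γ s)]; linarith
      _ = e + δ := by ring
  refine Metric.diam_le_of_forall_dist_le hε.le ?_
  rintro p ⟨x, hx, rfl⟩ q ⟨y, hy, rfl⟩
  rcases le_total x y with h | h
  · exact (key x hx y hy h).trans heε
  · rw [dist_comm]; exact (key y hy x hx h).trans heε
end

section
/- Let M be a compact metric space equipped with a continuous action of the circle group Circle such that the orbit length ℓ(x) is finite for every x ∈ M. Let B be the set of points x ∈ M such that ℓ is not bounded above on any neighborhood of x. Then B is closed, B is a union of orbits, and B has empty interior. -/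
open scoped Real
open Set Topology

private lemma evar_shift {E : Type*} [PseudoEMetricSpace E] (f : ℝ → E) (a b c : ℝ) :
    eVariationOn (fun t => f (t + c)) (Set.Icc a b) = eVariationOn f (Set.Icc (a + c) (b + c)) := by
  have h := eVariationOn.comp_eq_of_monotoneOn f (fun t : ℝ => t + c)
    ((monotone_id.add_const c).monotoneOn (Set.Icc a b))
  rw [show (fun t => f (t + c)) = f ∘ (fun t : ℝ => t + c) from rfl, h,
    Set.image_add_const_Icc]

private lemma evar_Icc_add_Icc {E : Type*} [PseudoEMetricSpace E] (f : ℝ → E) {a b c : ℝ}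
    (hab : a ≤ b) (hbc : b ≤ c) :
    eVariationOn f (Set.Icc a b) + eVariationOn f (Set.Icc b c)
      = eVariationOn f (Set.Icc a c) := by
  have h := eVariationOn.Icc_add_Icc f (s := Set.univ) hab hbc (Set.mem_univ b)
  simpa using h

private lemma evar_periodic {E : Type*} [PseudoEMetricSpace E] {f : ℝ → E} {T : ℝ}
    (hf : Function.Periodic f T) {s : ℝ} (hs : s ∈ Set.Icc (-T) T) :
    eVariationOn f (Set.Icc s (s + T)) = eVariationOn f (Set.Icc 0 T) := by
  have hfs : (fun t : ℝ => f (t + T)) = f := funext hf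
  rcases le_or_gt 0 s with h0 | h0
  · have h1 : s ≤ T := hs.2
    have h2 : eVariationOn f (Set.Icc T (s + T)) = eVariationOn f (Set.Icc 0 s) := by
      have := evar_shift f 0 s T
      rw [hfs, zero_add] at this
      rw [← this]
    rw [← evar_Icc_add_Icc f h1 (by linarith : T ≤ s + T), h2, add_comm,
      evar_Icc_add_Icc f h0 h1]
  · have h1 : (0:ℝ) ≤ s + T := by linarith [hs.1]
    have h2 : s + T ≤ T := by linarith
    have h3 : eVariationOn f (Set.Icc s 0) = eVariationOn f (Set.Icc (s + T) T) := by
      have := evar_shift f s 0 T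
      rw [hfs, zero_add] at this
      rw [this]
    rw [← evar_Icc_add_Icc f (le_of_lt h0) h1, h3, add_comm,
      evar_Icc_add_Icc f h1 h2]

/-- For a continuous circle action on a compact metric space with all orbits of finite
length, the bad set — the set of points near which the orbit length function is not
locally bounded — is closed, saturated (a union of orbits), and has empty interior
(the circle-action instance of §3.1 of Hurder–Walczak). -/
theorem stmt6 {M : Type*} [MetricSpace M] [CompactSpace M]
    [MulAction Circle M] [ContinuousSMul Circle M]
    (ℓ : M → ENNReal)
    (hℓ : ∀ x : M,
      ℓ x = eVariationOn (fun t : ℝ => Circle.exp t • x) (Set.Icc 0 (2 * π)))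
    (hfin : ∀ x : M, ℓ x ≠ ⊤)
    (B : Set M)
    (hB : B = {x : M | ∀ U : Set M, IsOpen U → x ∈ U → sSup (ℓ '' U) = ⊤}) :
    IsClosed B ∧ (∀ x ∈ B, ∀ g : Circle, g • x ∈ B) ∧ interior B = ∅ := by
  have hπ : (0:ℝ) < π := Real.pi_pos
  -- invariance of ℓ under the action
  have key : ∀ (g : Circle) (x : M), ℓ (g • x) = ℓ x := by
    intro g x
    set s := Complex.arg (g : ℂ) with hsdef
    have hg : Circle.exp s = g := Circle.exp_arg g
    have hper : Function.Periodic (fun u : ℝ => Circle.exp u • x) (2 * π) := by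
      intro u
      simp only [Circle.periodic_exp u]
    have hmem : s ∈ Set.Icc (-(2 * π)) (2 * π) :=
      ⟨by have := Complex.neg_pi_lt_arg (g : ℂ); linarith,
       by have := Complex.arg_le_pi (g : ℂ); linarith⟩
    rw [hℓ, hℓ]
    calc eVariationOn (fun t : ℝ => Circle.exp t • (g • x)) (Set.Icc 0 (2 * π))
        = eVariationOn (fun t : ℝ => (fun u : ℝ => Circle.exp u • x) (t + s))
            (Set.Icc 0 (2 * π)) := by
          have hfun : (fun t : ℝ => Circle.exp t • (g • x))
              = fun t : ℝ => (fun u : ℝ => Circle.exp u • x) (t + s) := by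
            funext t; simp only [← hg, smul_smul, ← Circle.exp_add]
          rw [hfun]
      _ = eVariationOn (fun u : ℝ => Circle.exp u • x) (Set.Icc (0 + s) (2 * π + s)) :=
          evar_shift (fun u : ℝ => Circle.exp u • x) 0 (2 * π) s
      _ = eVariationOn (fun u : ℝ => Circle.exp u • x) (Set.Icc 0 (2 * π)) := by
          rw [zero_add, add_comm]; exact evar_periodic hper hmem
  -- lower semicontinuity: sublevel sets of ℓ are closed
  have lsc : ∀ n : ℕ, IsClosed {x : M | ℓ x ≤ (n : ENNReal)} := by
    intro n
    rw [← isOpen_compl_iff, isOpen_iff_mem_nhds]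
    intro x hx
    simp only [Set.mem_compl_iff, Set.mem_setOf_eq, not_le] at hx
    rw [hℓ x] at hx
    have h := eVariationOn.lowerSemicontinuous_aux
      (F := fun (y : M) (t : ℝ) => Circle.exp t • y) (p := 𝓝 x)
      (f := fun t : ℝ => Circle.exp t • x) (s := Set.Icc 0 (2 * π))
      (fun t _ => ((continuous_const_smul (Circle.exp t)).tendsto x)) hx
    filter_upwards [h] with y hy
    simp only [Set.mem_compl_iff, Set.mem_setOf_eq, not_le, hℓ y]
    exact hy
  -- closedness of B
  have hBclosed : IsClosed B := by
    rw [← isOpen_compl_iff, isOpen_iff_mem_nhds]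
    intro x hx
    rw [hB] at hx
    simp only [Set.mem_compl_iff, Set.mem_setOf_eq, not_forall] at hx
    obtain ⟨U, hU, hxU, hsup⟩ := hx
    refine Filter.mem_of_superset (hU.mem_nhds hxU) (fun y hy hyB => ?_)
    rw [hB] at hyB
    exact hsup (hyB U hU hy)
  refine ⟨hBclosed, ?_, ?_⟩
  · -- saturation
    intro x hx g
    rw [hB] at hx ⊢
    intro U hU hgxU
    have hV : IsOpen ((fun y : M => g • y) ⁻¹' U) := hU.preimage (continuous_const_smul g)
    have hsup := hx _ hV hgxU
    have hsub : ℓ '' ((fun y : M => g • y) ⁻¹' U) ⊆ ℓ '' U := by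
      rintro _ ⟨y, hy, rfl⟩
      exact ⟨g • y, hy, key g y⟩
    exact top_le_iff.mp (hsup ▸ sSup_le_sSup hsub)
  · -- empty interior
    by_contra h
    obtain ⟨x, hx⟩ := Set.nonempty_iff_ne_empty.mpr h
    set V := interior B with hVdef
    have hV : IsOpen V := isOpen_interior
    haveI : Nonempty V := ⟨⟨x, hx⟩⟩
    haveI := hV.locallyCompactSpace
    have hclosed : ∀ n : ℕ,
        IsClosed ((Subtype.val : V → M) ⁻¹' {z : M | ℓ z ≤ (n : ENNReal)}) :=
      fun n => (lsc n).preimage continuous_subtype_val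
    have hcover : (⋃ n : ℕ, (Subtype.val : V → M) ⁻¹' {z : M | ℓ z ≤ (n : ENNReal)})
        = Set.univ := by
      rw [Set.eq_univ_iff_forall]
      intro z
      obtain ⟨n, hn⟩ := ENNReal.exists_nat_gt (hfin z.1)
      exact Set.mem_iUnion.mpr ⟨n, le_of_lt hn⟩
    obtain ⟨n, y, hy⟩ := nonempty_interior_of_iUnion_of_closed hclosed hcover
    set W := (Subtype.val : V → M) ''
      (interior ((Subtype.val : V → M) ⁻¹' {z : M | ℓ z ≤ (n : ENNReal)})) with hWdef
    have hWopen : IsOpen W := hV.isOpenEmbedding_subtypeVal.isOpenMap _ isOpen_interior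
    have hyW : (y : M) ∈ W := ⟨y, hy, rfl⟩
    have hyB : (y : M) ∈ B := interior_subset y.2
    rw [hB] at hyB
    have hsup := hyB W hWopen hyW
    have hle : sSup (ℓ '' W) ≤ (n : ENNReal) := by
      apply sSup_le
      rintro _ ⟨z, hz, rfl⟩
      obtain ⟨w, hw, rfl⟩ := hz
      have h1 : w ∈ (Subtype.val : V → M) ⁻¹' {z : M | ℓ z ≤ (n : ENNReal)} :=
        interior_subset hw
      exact h1
    rw [hsup] at hle
    exact ENNReal.natCast_ne_top n (top_le_iff.mp hle)
end

section
/- Let M be a closed (compact, boundaryless) smooth manifold whose topology is induced by a metric d, and let φ : ℝ × M → M be a smooth flow such that every point of M is periodic and no point is fixed. Then for every x' ∈ M, every ε > 0 and every Λ > 0 there exists δ > 0 with the following property: if x ∈ M admits a period T > 0 (φ(T,x) = x) with eVariationOn (t ↦ φ(t,x)) [0,T] < Λ, and if some point of the orbit of x lies at distance less than δ from the orbit of x', then every point of the orbit of x lies at distance less than ε from the orbit of x'. -/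
open scoped Manifold
open Filter Topology
open scoped ENNReal

/-- Integer-multiples of a period are periods. -/
private lemma stmt8_per_int {M : Type*} (φ : ℝ × M → M)
    (hadd : ∀ s t : ℝ, ∀ x : M, φ (s + t, x) = φ (s, φ (t, x)))
    {x : M} {T : ℝ} (hT : φ (T, x) = x) :
    ∀ (n : ℤ) (t : ℝ), φ (t + (n : ℝ) * T, x) = φ (t, x) := by
  intro n
  induction n using Int.induction_on with
  | zero => intro t; simp
  | succ n ih =>
      intro t
      have e : t + ((n : ℤ) + 1 : ℤ) * T = (t + ((n : ℤ) : ℝ) * T) + T := by push_cast; ring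
      rw [e, hadd, hT, ih]
  | pred n ih =>
      intro t
      have e : t + ((-(n : ℤ) : ℤ) : ℝ) * T = (t + ((-(n : ℤ) - 1 : ℤ) : ℝ) * T) + T := by
        push_cast; ring
      have h2 := ih t
      rw [e, hadd, hT] at h2
      exact h2

/-- Reduction modulo a positive period lands in `[0, T]`. -/
private lemma stmt8_mod {T : ℝ} (hT : 0 < T) (s : ℝ) :
    0 ≤ s - T * ⌊s / T⌋ ∧ s - T * ⌊s / T⌋ ≤ T := by
  have h1 : (⌊s / T⌋ : ℝ) ≤ s / T := Int.floor_le _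
  have h2 : s / T < ⌊s / T⌋ + 1 := Int.lt_floor_add_one _
  have e : T * (s / T) = s := by field_simp
  constructor
  · nlinarith [mul_le_mul_of_nonneg_left h1 hT.le]
  · nlinarith [mul_lt_mul_of_pos_left h2 hT]

/-- Captured orbits: for a smooth everywhere-periodic nonsingular flow on a closed
smooth manifold, for each orbit-length bound `Λ` there is `δ > 0` such that every
periodic orbit of length less than `Λ` meeting the `δ`-neighborhood of the orbit of
`x'` lies entirely within distance `ε` of that orbit (the flow instance of
Proposition 2.6 of Hurder–Walczak). -/
theorem stmt8 {n : ℕ} {M : Type*} [MetricSpace M]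
    [ChartedSpace (EuclideanSpace ℝ (Fin n)) M]
    [IsManifold (𝓡 n) (⊤ : ℕ∞) M] [CompactSpace M]
    (φ : ℝ × M → M)
    (hφ : ContMDiff ((𝓘(ℝ, ℝ)).prod (𝓡 n)) (𝓡 n) (⊤ : ℕ∞) φ)
    (hzero : ∀ x : M, φ (0, x) = x)
    (hadd : ∀ s t : ℝ, ∀ x : M, φ (s + t, x) = φ (s, φ (t, x)))
    (hper : ∀ x : M, ∃ T > (0:ℝ), φ (T, x) = x)
    (hnonfix : ∀ x : M, ∃ t : ℝ, φ (t, x) ≠ x)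
    (x' : M) (ε Λ : ℝ) (hε : 0 < ε) (hΛ : 0 < Λ) :
    ∃ δ > (0:ℝ), ∀ x : M, ∀ T > (0:ℝ), φ (T, x) = x →
      eVariationOn (fun t : ℝ => φ (t, x)) (Set.Icc 0 T) < ENNReal.ofReal Λ →
      (∃ s s' : ℝ, dist (φ (s, x)) (φ (s', x')) < δ) →
      ∀ s : ℝ, ∃ s' : ℝ, dist (φ (s, x)) (φ (s', x')) < ε := by
  classical
  obtain hM | hM := isEmpty_or_nonempty M
  · exact ⟨1, one_pos, fun x => (hM.false x).elim⟩
  have cφ : Continuous φ := hφ.continuous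
  -- Step 1: a uniform escape time and distance.
  have hpos : ∀ x : M, ∃ t, 0 < t ∧ φ (t, x) ≠ x := by
    intro x
    obtain ⟨t, ht⟩ := hnonfix x
    rcases lt_trichotomy t 0 with h | h | h
    · refine ⟨-t, by linarith, fun he => ht ?_⟩
      have h2 : φ (t, φ (-t, x)) = φ (t, x) := by rw [he]
      rw [← hadd] at h2
      simpa [hzero] using h2.symm
    · exact absurd (by rw [h]; exact hzero x) ht
    · exact ⟨t, h, ht⟩
  choose tt htt hne using hpos
  have hUopen : ∀ x : M, IsOpen {z : M | dist (φ (tt x, x)) x / 2 < dist (φ (tt x, z)) z} := by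
    intro x
    exact isOpen_lt continuous_const
      ((cφ.comp (continuous_const.prodMk continuous_id)).dist continuous_id)
  have hcover : (Set.univ : Set M) ⊆
      ⋃ x, {z : M | dist (φ (tt x, x)) x / 2 < dist (φ (tt x, z)) z} := by
    intro z _
    exact Set.mem_iUnion.2 ⟨z, half_lt_self (dist_pos.2 (hne z))⟩
  obtain ⟨S, hS⟩ := isCompact_univ.elim_finite_subcover _ hUopen hcover
  have hSne : S.Nonempty := by
    obtain ⟨x0⟩ := hM
    obtain ⟨i, hi, _⟩ := Set.mem_iUnion₂.1 (hS (Set.mem_univ x0))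
    exact ⟨i, hi⟩
  set τ : ℝ := S.sup' hSne tt with hτdef
  set a : ℝ := S.inf' hSne (fun x => dist (φ (tt x, x)) x / 2) with hadef
  obtain ⟨i0, hi0⟩ := hSne
  have hτ : 0 < τ := lt_of_lt_of_le (htt i0) (Finset.le_sup' tt hi0)
  have ha : 0 < a := by
    rw [hadef]; refine (Finset.lt_inf'_iff _).2 ?_
    intro i _
    exact half_pos (dist_pos.2 (hne i))
  have hA : ∀ z : M, ∃ t, 0 < t ∧ t ≤ τ ∧ a ≤ dist (φ (t, z)) z := by
    intro z
    obtain ⟨i, hiS, hiz⟩ := Set.mem_iUnion₂.1 (hS (Set.mem_univ z))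
    exact ⟨tt i, htt i, Finset.le_sup' tt hiS,
      ((Finset.inf'_le _ hiS).trans hiz.le)⟩
  -- Step 2: periods of orbits with variation < Λ are bounded by Tmax.
  set N : ℕ := ⌈Λ / a⌉₊ with hNdef
  set Tmax : ℝ := (N : ℝ) * τ with hTmaxdef
  have hTbound : ∀ x : M, ∀ T : ℝ, 0 < T → φ (T, x) = x →
      eVariationOn (fun t : ℝ => φ (t, x)) (Set.Icc 0 T) < ENNReal.ofReal Λ → T ≤ Tmax := by
    intro x T hT0 _ hvar
    by_contra hlt
    push_neg at hlt
    choose t ht0 htτ hta using fun k : ℕ => hA (φ ((k : ℝ) * τ, x))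
    set u : ℕ → ℝ := fun i => ((i / 2 : ℕ) : ℝ) * τ + if i % 2 = 1 then t (i / 2) else 0
      with hudef
    have hu2k : ∀ k, u (2 * k) = (k : ℝ) * τ := by
      intro k
      have e1 : (2 * k) / 2 = k := by omega
      have e2 : (2 * k) % 2 = 0 := by omega
      simp [hudef, e1, e2]
    have hu2k1 : ∀ k, u (2 * k + 1) = (k : ℝ) * τ + t k := by
      intro k
      have e1 : (2 * k + 1) / 2 = k := by omega
      have e2 : (2 * k + 1) % 2 = 1 := by omega
      simp [hudef, e1, e2]
    have humono : Monotone u := by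
      apply monotone_nat_of_le_succ
      intro i
      rcases Nat.even_or_odd i with ⟨k, hk⟩ | ⟨k, hk⟩
      · have hik : i = 2 * k := by omega
        subst hik
        rw [hu2k, hu2k1]
        linarith [ht0 k]
      · have hik : i = 2 * k + 1 := by omega
        subst hik
        rw [hu2k1, show 2 * k + 1 + 1 = 2 * (k + 1) by ring, hu2k]
        push_cast
        linarith [htτ k]
    have humem : ∀ i ∈ Set.Icc 0 (2 * N), u i ∈ Set.Icc (0:ℝ) T := by
      intro i hi
      constructor
      · have h0 : u 0 = 0 := by
          have := hu2k 0
          simpa using this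
        have := humono (Nat.zero_le i)
        rw [h0] at this
        exact this
      · have h1 : u i ≤ u (2 * N) := humono hi.2
        rw [hu2k N] at h1
        exact h1.trans hlt.le
    have hsum : (∑ i ∈ Finset.Ico 0 (2 * N),
        edist (φ (u (i + 1), x)) (φ (u i, x))) ≤
        eVariationOn (fun t : ℝ => φ (t, x)) (Set.Icc 0 T) :=
      eVariationOn.sum_le_of_monotoneOn_Icc (humono.monotoneOn _) humem
    have key : (N : ℝ≥0∞) * ENNReal.ofReal a ≤
        ∑ i ∈ Finset.Ico 0 (2 * N), edist (φ (u (i + 1), x)) (φ (u i, x)) := by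
      have h1 : ∀ k ∈ Finset.range N,
          ENNReal.ofReal a ≤ edist (φ (u (2 * k + 1), x)) (φ (u (2 * k), x)) := by
        intro k _
        rw [hu2k1, hu2k, edist_dist]
        apply ENNReal.ofReal_le_ofReal
        have e : φ ((k : ℝ) * τ + t k, x) = φ (t k, φ ((k : ℝ) * τ, x)) := by
          rw [add_comm, hadd]
        rw [e]
        exact hta k
      calc (N : ℝ≥0∞) * ENNReal.ofReal a
          = ∑ _k ∈ Finset.range N, ENNReal.ofReal a := by
            simp [Finset.sum_const, nsmul_eq_mul]
        _ ≤ ∑ k ∈ Finset.range N, edist (φ (u (2 * k + 1), x)) (φ (u (2 * k), x)) :=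
            Finset.sum_le_sum h1
        _ = ∑ i ∈ (Finset.range N).image (fun k => 2 * k),
              edist (φ (u (i + 1), x)) (φ (u i, x)) := by
            rw [Finset.sum_image (by intro p _ q _ h; simp only at h; omega)]
        _ ≤ ∑ i ∈ Finset.Ico 0 (2 * N), edist (φ (u (i + 1), x)) (φ (u i, x)) := by
            apply Finset.sum_le_sum_of_subset
            intro i hi
            simp only [Finset.mem_image, Finset.mem_range] at hi
            obtain ⟨k, hk, rfl⟩ := hi
            simp only [Finset.mem_Ico]
            omega
    have hΛa : Λ ≤ (N : ℝ) * a := by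
      have hle : Λ / a ≤ (N : ℝ) := Nat.le_ceil (Λ / a)
      have e : (Λ / a) * a = Λ := by field_simp
      nlinarith
    have hfin : ENNReal.ofReal Λ ≤ eVariationOn (fun t : ℝ => φ (t, x)) (Set.Icc 0 T) := by
      calc ENNReal.ofReal Λ ≤ ENNReal.ofReal ((N : ℝ) * a) := ENNReal.ofReal_le_ofReal hΛa
        _ = (N : ℝ≥0∞) * ENNReal.ofReal a := by
            rw [ENNReal.ofReal_mul (by positivity), ENNReal.ofReal_natCast]
        _ ≤ _ := key.trans hsum
    exact absurd hvar (not_lt.2 hfin)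
  -- Step 3: main compactness argument.
  obtain ⟨T', hT', hx'per⟩ := hper x'
  by_contra hcon
  push_neg at hcon
  have hseq : ∀ k : ℕ, ∃ (y : M) (v w : ℝ), v ∈ Set.Icc (0:ℝ) Tmax ∧ w ∈ Set.Icc (0:ℝ) T' ∧
      dist y (φ (w, x')) < 1 / (k + 1) ∧
      ∀ s' : ℝ, ε ≤ dist (φ (v, y)) (φ (s', x')) := by
    intro k
    obtain ⟨x, T, hT0, hTx, hvar, ⟨s, s', hss'⟩, b, hb⟩ := hcon (1 / (k + 1)) (by positivity)
    set y : M := φ (s, x) with hydef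
    have hyper : φ (T, y) = y := by
      rw [hydef, ← hadd, add_comm, hadd, hTx]
    have hTle : T ≤ Tmax := hTbound x T hT0 hTx hvar
    set v : ℝ := (b - s) - T * ⌊(b - s) / T⌋ with hvdef
    set w : ℝ := s' - T' * ⌊s' / T'⌋ with hwdef
    have hvmem : v ∈ Set.Icc (0:ℝ) Tmax := by
      obtain ⟨h1, h2⟩ := stmt8_mod hT0 (b - s)
      exact ⟨h1, h2.trans hTle⟩
    have hwmem : w ∈ Set.Icc (0:ℝ) T' := by
      obtain ⟨h1, h2⟩ := stmt8_mod hT' s'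
      exact ⟨h1, h2⟩
    have hvy : φ (v, y) = φ (b, x) := by
      have h1 : φ (v, y) = φ (b - s, y) := by
        have := stmt8_per_int φ hadd hyper (-⌊(b - s) / T⌋) (b - s)
        rw [show v = (b - s) + ((-⌊(b - s) / T⌋ : ℤ) : ℝ) * T by push_cast [hvdef]; ring]
        exact this
      have h2 : φ (b - s, y) = φ (b, x) := by
        rw [hydef, ← hadd, sub_add_cancel]
      rw [h1, h2]
    have hwx' : φ (w, x') = φ (s', x') := by
      have := stmt8_per_int φ hadd hx'per (-⌊s' / T'⌋) s'
      rw [show w = s' + ((-⌊s' / T'⌋ : ℤ) : ℝ) * T' by push_cast [hwdef]; ring]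
      exact this
    refine ⟨y, v, w, hvmem, hwmem, ?_, ?_⟩
    · rw [hwx']
      exact hss'
    · intro s''
      rw [hvy]
      exact hb s''
  choose y v w hv hw hclose hbad using hseq
  have hKc : IsCompact ((Set.univ : Set M) ×ˢ
      (Set.Icc (0:ℝ) Tmax ×ˢ Set.Icc (0:ℝ) T')) :=
    isCompact_univ.prod (isCompact_Icc.prod isCompact_Icc)
  obtain ⟨⟨ylim, vlim, wlim⟩, _, g, hg, hlim⟩ :=
    hKc.tendsto_subseq (x := fun k => (y k, v k, w k))
      (fun k => ⟨Set.mem_univ _, hv k, hw k⟩)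
  have hy : Tendsto (fun k => y (g k)) atTop (𝓝 ylim) :=
    (continuous_fst.tendsto _).comp hlim
  have hv' : Tendsto (fun k => v (g k)) atTop (𝓝 vlim) :=
    ((continuous_fst.comp continuous_snd).tendsto _).comp hlim
  have hw' : Tendsto (fun k => w (g k)) atTop (𝓝 wlim) :=
    ((continuous_snd.comp continuous_snd).tendsto _).comp hlim
  have h1 : Tendsto (fun k => φ (w (g k), x')) atTop (𝓝 (φ (wlim, x'))) :=
    (cφ.tendsto _).comp (hw'.prodMk_nhds tendsto_const_nhds)
  have hdist0 : Tendsto (fun k => dist (y (g k)) (φ (w (g k), x'))) atTop (𝓝 0) := by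
    have hb : Tendsto (fun k : ℕ => 1 / ((g k : ℝ) + 1)) atTop (𝓝 0) :=
      tendsto_one_div_add_atTop_nhds_zero_nat.comp hg.tendsto_atTop
    refine squeeze_zero (fun k => dist_nonneg) (fun k => (hclose (g k)).le) hb
  have hyw : ylim = φ (wlim, x') := by
    have h2 : Tendsto (fun k => dist (y (g k)) (φ (w (g k), x'))) atTop
        (𝓝 (dist ylim (φ (wlim, x')))) := hy.dist h1
    exact eq_of_dist_eq_zero (tendsto_nhds_unique h2 hdist0)
  have h3 : Tendsto (fun k => φ (v (g k), y (g k))) atTop (𝓝 (φ (vlim + wlim, x'))) := by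
    have : Tendsto (fun k => φ (v (g k), y (g k))) atTop (𝓝 (φ (vlim, ylim))) :=
      (cφ.tendsto _).comp (hv'.prodMk_nhds hy)
    rwa [hyw, ← hadd] at this
  have h5 : Tendsto (fun k => dist (φ (v (g k), y (g k))) (φ (vlim + wlim, x'))) atTop
      (𝓝 0) := (tendsto_iff_dist_tendsto_zero).1 h3
  have h6 : ε ≤ (0:ℝ) :=
    ge_of_tendsto h5 (Filter.Eventually.of_forall fun k => hbad (g k) _)
  linarith
end

section
/- Let M be a closed (compact, boundaryless) smooth manifold and let φ : ℝ × M → M be a smooth flow such that every point of M is periodic and no point is fixed. Let x₀ ∈ M, let L = {φ(t,x₀) : t ∈ ℝ} be its orbit, and let H : L × [0,1] → M be a continuous homotopy with H(·,0) the inclusion of L into M, such that for every t ∈ [0,1] the image H(L × {t}) is contained in a single orbit O_t. Then H(L × {t}) = O_t for every t ∈ [0,1]; that is, each map H(·,t) sends L onto an entire orbit. -/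
set_option maxHeartbeats 1000000

open Set
open scoped Manifold RealInnerProductSpace

namespace Stmt9Aux

variable {M : Type*}

section Pure
variable {φ : ℝ × M → M}

lemma per_neg (hzero : ∀ x : M, φ (0, x) = x)
    (hadd : ∀ s t : ℝ, ∀ x : M, φ (s + t, x) = φ (s, φ (t, x)))
    {x : M} {s : ℝ} (h : φ (s, x) = x) : φ (-s, x) = x := by
  have h2 := hadd (-s) s x
  rw [h, neg_add_cancel, hzero] at h2
  exact h2.symm

lemma per_add (hadd : ∀ s t : ℝ, ∀ x : M, φ (s + t, x) = φ (s, φ (t, x)))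
    {x : M} {s u : ℝ} (hs : φ (s, x) = x) (hu : φ (u, x) = x) : φ (s + u, x) = x := by
  rw [hadd, hu, hs]

lemma per_nsmul (hzero : ∀ x : M, φ (0, x) = x)
    (hadd : ∀ s t : ℝ, ∀ x : M, φ (s + t, x) = φ (s, φ (t, x)))
    {x : M} {T : ℝ} (h : φ (T, x) = x) : ∀ k : ℕ, φ (k * T, x) = x := by
  intro k
  induction k with
  | zero => simpa using hzero x
  | succ m ih =>
      have : ((m : ℝ) + 1) * T = T + m * T := by ring
      rw [Nat.cast_succ, this, hadd, ih, h]

lemma per_zsmul (hzero : ∀ x : M, φ (0, x) = x)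
    (hadd : ∀ s t : ℝ, ∀ x : M, φ (s + t, x) = φ (s, φ (t, x)))
    {x : M} {T : ℝ} (h : φ (T, x) = x) : ∀ k : ℤ, φ (k * T, x) = x := by
  intro k
  rcases le_or_gt 0 k with hk | hk
  · lift k to ℕ using hk
    exact_mod_cast per_nsmul hzero hadd h k
  · have hk' : 0 ≤ -k := by omega
    lift -k to ℕ using hk' with m hm
    have : ((k : ℝ) * T) = -(m * T) := by
      have : (m : ℝ) = -(k : ℝ) := by exact_mod_cast congrArg (fun z : ℤ => (z : ℝ)) hm
      rw [this]; ring
    rw [this]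
    exact per_neg hzero hadd (per_nsmul hzero hadd h m)

lemma per_orbit (hadd : ∀ s t : ℝ, ∀ x : M, φ (s + t, x) = φ (s, φ (t, x)))
    {y : M} {T u : ℝ} (h : φ (T, y) = y) : φ (T, φ (u, y)) = φ (u, y) := by
  rw [← hadd, add_comm, hadd, h]

/-- From a period of `φ (u, y)` get a period of `y`. -/
lemma per_orbit' (hzero : ∀ x : M, φ (0, x) = x)
    (hadd : ∀ s t : ℝ, ∀ x : M, φ (s + t, x) = φ (s, φ (t, x)))
    {y : M} {T u : ℝ} (h : φ (T, φ (u, y)) = φ (u, y)) : φ (T, y) = y := by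
  have h1 : φ (-u, φ (T, φ (u, y))) = φ (-u, φ (u, y)) := by rw [h]
  have h2 : φ (-u, φ (u, y)) = y := by rw [← hadd, neg_add_cancel, hzero]
  rw [h2] at h1
  calc φ (T, y) = φ (T, φ (-u, φ (u, y))) := by rw [h2]
    _ = φ (T + -u, φ (u, y)) := by rw [hadd]
    _ = φ (-u + T, φ (u, y)) := by rw [add_comm]
    _ = φ (-u, φ (T, φ (u, y))) := by rw [hadd]
    _ = y := h1

lemma per_of_interval (hzero : ∀ x : M, φ (0, x) = x)
    (hadd : ∀ s t : ℝ, ∀ x : M, φ (s + t, x) = φ (s, φ (t, x)))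
    {p : M} {ρ : ℝ} (hρ : 0 < ρ) (h : ∀ s : ℝ, |s| < ρ → φ (s, p) = p) :
    ∀ t : ℝ, φ (t, p) = p := by
  intro t
  obtain ⟨m, hm⟩ := exists_nat_gt (|t| / ρ)
  have hm0 : 0 < (m : ℝ) := lt_of_le_of_lt (div_nonneg (abs_nonneg t) hρ.le) hm
  have hsm : |t / m| < ρ := by
    rw [abs_div, abs_of_pos hm0]
    rw [div_lt_iff₀ hm0]
    have := (div_lt_iff₀ hρ).mp hm
    linarith [this]
  have := per_nsmul hzero hadd (h (t / m) hsm) m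
  rwa [mul_div_cancel₀ _ (ne_of_gt hm0)] at this

/-- Existence of a (minimal) period generating all periods. -/
lemma exists_min_period (hzero : ∀ x : M, φ (0, x) = x)
    (hadd : ∀ s t : ℝ, ∀ x : M, φ (s + t, x) = φ (s, φ (t, x)))
    {ε : ℝ} (hε : 0 < ε)
    (hsmall : ∀ x : M, ∀ h : ℝ, |h| ≤ ε → φ (h, x) = x → h = 0)
    (x : M) (hx : ∃ T > 0, φ (T, x) = x) :
    ∃ T : ℝ, ε ≤ T ∧ φ (T, x) = x ∧ ∀ s : ℝ, φ (s, x) = x → ∃ k : ℤ, s = k * T := by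
  set S : Set ℝ := {s | 0 < s ∧ φ (s, x) = x} with hS
  have hSne : S.Nonempty := by
    obtain ⟨T, hT0, hTp⟩ := hx; exact ⟨T, hT0, hTp⟩
  have hSeps : ∀ s ∈ S, ε < s := by
    intro s hs
    by_contra hle
    push_neg at hle
    have : s = 0 := hsmall x s (by rw [abs_of_pos hs.1]; exact hle) hs.2
    exact hs.1.ne' this
  have hbdd : BddBelow S := ⟨ε, fun s hs => (hSeps s hs).le⟩
  set T := sInf S with hT
  have hTeps : ε ≤ T := le_csInf hSne fun s hs => (hSeps s hs).le
  have hT0 : 0 < T := lt_of_lt_of_le hε hTeps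
  -- T ∈ S
  have hTS : T ∈ S := by
    obtain ⟨s₁, hs₁S, hs₁lt⟩ : ∃ s₁ ∈ S, s₁ < T + ε / 2 := by
      apply exists_lt_of_csInf_lt hSne; linarith
    have hTle : T ≤ s₁ := csInf_le hbdd hs₁S
    rcases eq_or_lt_of_le hTle with heq | hlt
    · rwa [heq]
    · obtain ⟨s₂, hs₂S, hs₂lt⟩ : ∃ s₂ ∈ S, s₂ < s₁ := exists_lt_of_csInf_lt hSne hlt
      have hT2 : T ≤ s₂ := csInf_le hbdd hs₂S
      have hper : φ (s₁ - s₂, x) = x := by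
        have := per_add hadd hs₁S.2 (per_neg hzero hadd hs₂S.2)
        rwa [sub_eq_add_neg]
      have : s₁ - s₂ = 0 := by
        apply hsmall x _ _ hper
        rw [abs_of_pos (by linarith)]
        linarith
      linarith
  refine ⟨T, hTeps, hTS.2, ?_⟩
  intro s hs
  refine ⟨⌊s / T⌋, ?_⟩
  set k := ⌊s / T⌋ with hk
  have h1 : (k : ℝ) ≤ s / T := Int.floor_le _
  have h2 : s / T < k + 1 := Int.lt_floor_add_one _
  have hr0 : 0 ≤ s - k * T := by
    have := mul_le_mul_of_nonneg_right h1 hT0.le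
    rw [div_mul_cancel₀ _ hT0.ne'] at this
    linarith
  have hrT : s - k * T < T := by
    have := mul_lt_mul_of_pos_right h2 hT0
    rw [div_mul_cancel₀ _ hT0.ne'] at this
    nlinarith
  have hper : φ (s - k * T, x) = x := by
    have := per_add hadd hs (per_neg hzero hadd (per_zsmul hzero hadd hTS.2 k))
    rwa [sub_eq_add_neg]
  rcases eq_or_lt_of_le hr0 with heq | hlt
  · linarith [heq]
  · exfalso
    have : T ≤ s - k * T := csInf_le hbdd ⟨hlt, hper⟩
    linarith

end Pure

/-- A continuous function on a preconnected set with finite image is constant. -/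
lemma constant_of_finite_image {α β : Type*} [TopologicalSpace α] [TopologicalSpace β] [T1Space β]
    {f : α → β} {s : Set α} (hs : IsPreconnected s) (hf : ContinuousOn f s)
    {F : Set β} (hfin : F.Finite) (hsub : ∀ a ∈ s, f a ∈ F)
    {a b : α} (ha : a ∈ s) (hb : b ∈ s) : f a = f b := by
  by_contra hne
  have himg : IsPreconnected (f '' s) := hs.image f hf
  have h1 : IsOpen ({f a}ᶜ : Set β) := isOpen_compl_singleton
  have h2 : IsOpen ((F \ {f a})ᶜ : Set β) := (hfin.subset diff_subset).isClosed.isOpen_compl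
  have hcover : f '' s ⊆ {f a}ᶜ ∪ (F \ {f a})ᶜ := by
    rintro z ⟨w, hw, rfl⟩
    by_cases hz : f w = f a
    · right; simp [hz]
    · left; exact hz
  have hne1 : (f '' s ∩ {f a}ᶜ).Nonempty := ⟨f b, ⟨b, hb, rfl⟩, fun h => hne (by simpa using h.symm ▸ rfl)⟩
  have hne2 : (f '' s ∩ (F \ {f a})ᶜ).Nonempty := ⟨f a, ⟨a, ha, rfl⟩, by simp⟩
  obtain ⟨z, hz1, hz2, hz3⟩ := himg _ _ h1 h2 hcover hne1 hne2
  obtain ⟨w, hw, rfl⟩ := hz1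
  apply hz3
  exact ⟨hsub w hw, hz2⟩

/-- Glue two continuous functions on adjacent intervals. -/
lemma glue_continuousOn {β : Type*} [TopologicalSpace β] {f g : ℝ → β} {a b c : ℝ}
    (hab : a ≤ b) (hbc : b ≤ c)
    (hf : ContinuousOn f (Icc a b)) (hg : ContinuousOn g (Icc b c)) (hfg : f b = g b) :
    ContinuousOn (fun s => if s ≤ b then f s else g s) (Icc a c) := by
  have hu : Icc a c ⊆ Icc a b ∪ Icc b c := by
    intro z hz
    rcases le_or_gt z b with h | h
    · exact Or.inl ⟨hz.1, h⟩
    · exact Or.inr ⟨h.le, hz.2⟩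
  have hcf : ContinuousOn (fun s => if s ≤ b then f s else g s) (Icc a b) := by
    apply hf.congr
    intro z hz
    simp [hz.2]
  have hcg : ContinuousOn (fun s => if s ≤ b then f s else g s) (Icc b c) := by
    apply hg.congr
    intro z hz
    rcases eq_or_lt_of_le hz.1 with heq | hlt
    · simp [← heq, hfg]
    · simp [not_le.mpr hlt]
  intro z hz
  have h1 : ContinuousWithinAt (fun s => if s ≤ b then f s else g s) (Icc a b) z := by
    by_cases h : z ∈ Icc a b
    · exact hcf z h
    · exact continuousWithinAt_of_notMem_closure (by rwa [isClosed_Icc.closure_eq])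
  have h2 : ContinuousWithinAt (fun s => if s ≤ b then f s else g s) (Icc b c) z := by
    by_cases h : z ∈ Icc b c
    · exact hcg z h
    · exact continuousWithinAt_of_notMem_closure (by rwa [isClosed_Icc.closure_eq])
  exact (h1.union h2).mono hu


section FlowBox

variable {n : ℕ} {M : Type*} [TopologicalSpace M]
  [ChartedSpace (EuclideanSpace ℝ (Fin n)) M]
  [IsManifold (𝓡 n) ((⊤ : ℕ∞) : WithTop ℕ∞) M]

/-- Flow box lemma: around any point there is a chart-like pair of continuous
functions `π` (time coordinate) and `v` (transverse coordinate). -/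
lemma flowbox (φ : ℝ × M → M)
    (hφ : ContMDiff ((𝓘(ℝ, ℝ)).prod (𝓡 n)) (𝓡 n) (⊤ : ℕ∞) φ)
    (hzero : ∀ x : M, φ (0, x) = x)
    (hadd : ∀ s t : ℝ, ∀ x : M, φ (s + t, x) = φ (s, φ (t, x)))
    (hnonfix : ∀ x : M, ∃ t : ℝ, φ (t, x) ≠ x)
    (p : M) :
    ∃ (U U' : Set M) (r : ℝ) (π : M → ℝ) (v : M → EuclideanSpace ℝ (Fin n)),
      IsOpen U ∧ IsOpen U' ∧ p ∈ U' ∧ U' ⊆ U ∧ 0 < r ∧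
      ContinuousOn π U ∧ ContinuousOn v U ∧
      (∀ a ∈ U', ∀ h : ℝ, |h| ≤ r →
        (φ (h, a) ∈ U ∧ π (φ (h, a)) = π a + h ∧ v (φ (h, a)) = v a)) ∧
      (∀ a ∈ U, ∀ b ∈ U, v a = v b → φ (π b - π a, a) = b) := by
  classical
  set E := EuclideanSpace ℝ (Fin n)
  set e := extChartAt (𝓡 n) p with he
  set x₀ : E := e p with hx₀
  set F : ℝ × E → E := fun q => e (φ (q.1, e.symm q.2)) with hF
  -- `F` is smooth at `(0, x₀)`
  have hsymm : ∀ q : ℝ × E, (extChartAt ((𝓘(ℝ, ℝ)).prod (𝓡 n)) (0, p)).symm q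
      = ((q.1 : ℝ), e.symm q.2) := by
    intro q
    rw [extChartAt_prod]
    simp only [PartialEquiv.prod_symm, PartialEquiv.prod_coe, extChartAt_model_space_eq_id,
      PartialEquiv.refl_symm, PartialEquiv.refl_coe, id_eq, he]
  have hpt : (extChartAt ((𝓘(ℝ, ℝ)).prod (𝓡 n)) (0, p)) ((0 : ℝ), p) = ((0 : ℝ), x₀) := by
    rw [extChartAt_prod]
    simp only [PartialEquiv.prod_coe, extChartAt_model_space_eq_id, PartialEquiv.refl_coe, id_eq, hx₀, he]
  have hFsmooth : ContDiffAt ℝ ((⊤ : ℕ∞) : WithTop ℕ∞) F (0, x₀) := by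
    have h1 : ContMDiffAt ((𝓘(ℝ, ℝ)).prod (𝓡 n)) (𝓡 n) (⊤ : ℕ∞) φ (0, p) := hφ.contMDiffAt
    rw [contMDiffAt_iff] at h1
    obtain ⟨-, h2⟩ := h1
    rw [ModelWithCorners.range_eq_univ, contDiffWithinAt_univ] at h2
    have heq : (extChartAt (𝓡 n) (φ (0, p)) ∘ φ ∘
        (extChartAt ((𝓘(ℝ, ℝ)).prod (𝓡 n)) (0, p)).symm) = F := by
      funext q
      simp only [Function.comp_apply, hsymm q, hF]
      rw [hzero p]
    rw [heq, hpt] at h2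
    exact h2
  set D := fderiv ℝ F (0, x₀) with hD
  have hDstrict : HasStrictFDerivAt F D (0, x₀) :=
    hFsmooth.hasStrictFDerivAt (by simp)
  have hx₀target : x₀ ∈ e.target := mem_extChartAt_target p
  have hx₀source : p ∈ e.source := mem_extChartAt_source p
  have hFid : ∀ x ∈ e.target, F (0, x) = x := by
    intro x hx
    simp only [hF]
    rw [hzero, e.right_inv hx]
  have hDid : ∀ ξ : E, D ((0 : ℝ), ξ) = ξ := by
    have hinr : HasFDerivAt (fun x : E => ((0 : ℝ), x))
        (ContinuousLinearMap.inr ℝ ℝ E) x₀ := (ContinuousLinearMap.inr ℝ ℝ E).hasFDerivAt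
    have hcomp : HasFDerivAt (fun x : E => F (0, x))
        (D.comp (ContinuousLinearMap.inr ℝ ℝ E)) x₀ :=
      (hDstrict.hasFDerivAt).comp x₀ hinr
    have heqv : (fun x : E => F (0, x)) =ᶠ[nhds x₀] id := by
      filter_upwards [(isOpen_extChartAt_target p).mem_nhds hx₀target] with x hx
      exact hFid x hx
    have hid : HasFDerivAt (fun x : E => F (0, x)) (ContinuousLinearMap.id ℝ E) x₀ :=
      (heqv.hasFDerivAt_iff).mpr (hasFDerivAt_id x₀)
    have := hcomp.unique hid
    intro ξ
    have h8 := ContinuousLinearMap.ext_iff.mp this ξ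
    simpa using h8
  set X : E := D ((1 : ℝ), (0 : E)) with hXdef
  have hDfull : ∀ σ : ℝ, ∀ ξ : E, D (σ, ξ) = σ • X + ξ := by
    intro σ ξ
    have h9 : (σ, ξ) = σ • (((1 : ℝ), (0 : E))) + (((0 : ℝ), ξ)) := by
      simp [Prod.ext_iff]
    rw [h9, map_add, map_smul, hDid]
  -- the generator is nonvanishing
  have hXne : X ≠ 0 := by
    intro hX0
    obtain ⟨u, hu_nhds, hu⟩ : ∃ u ∈ nhds ((0 : ℝ), x₀), ContDiffOn ℝ 1 F u :=
      hFsmooth.contDiffOn (by exact_mod_cast le_top) (by simp)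
    obtain ⟨ρ₁, hρ₁, hball⟩ := Metric.mem_nhds_iff.mp hu_nhds
    have hcont0 : Continuous (fun σ : ℝ => φ (σ, p)) :=
      hφ.continuous.comp (continuous_id.prodMk continuous_const)
    obtain ⟨ρ₂, hρ₂, hρ₂prop⟩ : ∃ ρ₂ > 0, ∀ σ : ℝ, |σ| < ρ₂ → φ (σ, p) ∈ e.source := by
      have h10 : (fun σ : ℝ => φ (σ, p)) ⁻¹' (extChartAt (𝓡 n) p).source ∈ nhds (0 : ℝ) := by
        apply hcont0.continuousAt.preimage_mem_nhds
        rw [hzero]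
        exact (isOpen_extChartAt_source p).mem_nhds (mem_extChartAt_source p)
      obtain ⟨ρ₂, h1, h2⟩ := Metric.mem_nhds_iff.mp h10
      exact ⟨ρ₂, h1, fun σ hσ => h2 (by simpa [Real.dist_eq] using hσ)⟩
    have hc0 : HasDerivAt (fun σ : ℝ => F (σ, x₀)) X 0 := by
      have h1 : HasDerivAt (fun σ : ℝ => ((σ : ℝ), x₀)) (((1 : ℝ), (0 : E))) 0 :=
        (hasDerivAt_id 0).prodMk (hasDerivAt_const 0 x₀)
      exact hDstrict.hasFDerivAt.comp_hasDerivAt 0 h1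
    set ρ := min ρ₁ ρ₂ with hρdef
    have hρpos : 0 < ρ := lt_min hρ₁ hρ₂
    have hderiv : ∀ σ : ℝ, |σ| < ρ → HasDerivAt (fun σ : ℝ => F (σ, x₀)) 0 σ := by
      intro σ hσ
      have hmem : ((σ : ℝ), x₀) ∈ Metric.ball ((0 : ℝ), x₀) ρ₁ := by
        simp only [Metric.mem_ball, Prod.dist_eq, dist_self, Real.dist_eq, sub_zero]
        simp only [max_lt_iff]
        exact ⟨lt_of_lt_of_le hσ (min_le_left _ _), hρ₁⟩
      have hdF : DifferentiableAt ℝ F (σ, x₀) := by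
        have hball' : u ∈ nhds ((σ : ℝ), x₀) :=
          Filter.mem_of_superset (Metric.isOpen_ball.mem_nhds hmem) hball
        exact (hu.differentiableOn one_ne_zero).differentiableAt hball'
      have hpair : HasFDerivAt (fun z : E => ((σ : ℝ), z))
          (ContinuousLinearMap.prod (0 : E →L[ℝ] ℝ) (ContinuousLinearMap.id ℝ E)) x₀ :=
        (hasFDerivAt_const σ x₀).prodMk (hasFDerivAt_id x₀)
      have hpart : HasFDerivAt (fun z : E => F (σ, z))
          ((fderiv ℝ F (σ, x₀)).comp
            (ContinuousLinearMap.prod (0 : E →L[ℝ] ℝ) (ContinuousLinearMap.id ℝ E))) x₀ :=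
        hdF.hasFDerivAt.comp x₀ hpair
      have hshift : HasDerivAt (fun s : ℝ => F (s - σ, x₀)) (0 : E) σ := by
        have h2 : HasDerivAt (fun s : ℝ => s - σ) 1 σ := (hasDerivAt_id σ).sub_const σ
        have h3 := HasDerivAt.scomp (𝕜 := ℝ) σ (by simpa using hc0) h2
        simp only [hX0, smul_zero] at h3
        exact h3
      have htilde : HasDerivAt (fun s : ℝ => F (σ, F (s - σ, x₀))) 0 σ := by
        have hpt0 : F (σ - σ, x₀) = x₀ := by rw [sub_self]; exact hFid x₀ hx₀target
        have h4 := hpart.comp_hasDerivAt_of_eq σ hshift hpt0.symm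
        simp only [map_zero] at h4
        exact h4
      have heqev : (fun s : ℝ => F (s, x₀)) =ᶠ[nhds σ] (fun s => F (σ, F (s - σ, x₀))) := by
        have hop : IsOpen {s : ℝ | |s - σ| < ρ₂} := by
          have : {s : ℝ | |s - σ| < ρ₂} = Metric.ball σ ρ₂ := by
            ext s; simp [Real.dist_eq]
          rw [this]; exact Metric.isOpen_ball
        filter_upwards [hop.mem_nhds (by simp [hρ₂])] with s hs
        have h5 : φ (s - σ, p) ∈ e.source := hρ₂prop _ hs
        have hps : e.symm x₀ = p := e.left_inv hx₀source
        simp only [hF]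
        rw [hps, e.left_inv h5, ← hadd]
        ring_nf
      exact htilde.congr_of_eventuallyEq heqev
    have hconst : ∀ σ : ℝ, |σ| < ρ → F (σ, x₀) = F (0, x₀) := by
      intro σ hσ
      have hd : ∀ z ∈ Metric.ball (0 : ℝ) ρ, HasFDerivAt (fun σ : ℝ => F (σ, x₀))
          (0 : ℝ →L[ℝ] E) z := by
        intro z hz
        have h6 := (hderiv z (by simpa [Real.dist_eq] using hz)).hasFDerivAt
        have h7 : (ContinuousLinearMap.toSpanSingleton ℝ (0 : E)) = (0 : ℝ →L[ℝ] E) := by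
          ext w; simp
        rwa [h7] at h6
      have hdiffOn : DifferentiableOn ℝ (fun σ : ℝ => F (σ, x₀)) (Metric.ball 0 ρ) :=
        fun z hz => ((hd z hz).differentiableAt).differentiableWithinAt
      apply (convex_ball (0 : ℝ) ρ).is_const_of_fderivWithin_eq_zero (𝕜 := ℝ) hdiffOn
        ?_ (by simpa [Real.dist_eq] using hσ) (Metric.mem_ball_self hρpos)
      intro z hz
      rw [fderivWithin_of_isOpen Metric.isOpen_ball hz]
      exact (hd z hz).fderiv
    have hfix : ∀ σ : ℝ, |σ| < ρ → φ (σ, p) = p := by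
      intro σ hσ
      have h6 := hconst σ hσ
      have hps : e.symm x₀ = p := e.left_inv hx₀source
      have h7 : e (φ (σ, p)) = e p := by
        have hl : F (σ, x₀) = e (φ (σ, p)) := by simp only [hF]; rw [hps]
        have hr : F (0, x₀) = e p := by simp only [hF]; rw [hps, hzero]
        rw [hl, hr] at h6
        exact h6
      exact e.injOn (hρ₂prop σ (lt_of_lt_of_le hσ (min_le_right _ _))) hx₀source h7
    obtain ⟨t, ht⟩ := hnonfix p
    exact ht (per_of_interval hzero hadd hρpos hfix t)
  -- inverse function theorem setup
  set W := (ℝ ∙ X)ᗮ with hW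
  set J : (ℝ × W) →L[ℝ] (ℝ × E) :=
    (ContinuousLinearMap.id ℝ ℝ).prodMap (W.subtypeL) with hJ
  set Dl : (ℝ × W) →L[ℝ] E := D.comp J with hDl
  have hDlapply : ∀ q : ℝ × W, Dl q = q.1 • X + (q.2 : E) := by
    intro q
    rw [show Dl q = D (q.1, (q.2 : E)) from rfl]
    exact hDfull q.1 (q.2 : E)
  have hinj : Function.Injective Dl := by
    intro a b hab
    have hc : Dl (a - b) = 0 := by rw [map_sub, hab, sub_self]
    rw [hDlapply] at hc
    set d := a - b with hd
    have hinner : ⟪X, d.1 • X + (d.2 : E)⟫ = (0 : ℝ) := by rw [hc]; exact inner_zero_right X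
    have hX2 : ⟪X, (d.2 : E)⟫ = (0 : ℝ) := by
      have := (Submodule.mem_orthogonal (ℝ ∙ X) (d.2 : E)).mp d.2.2
      exact this X (Submodule.mem_span_singleton_self X)
    rw [inner_add_right, real_inner_smul_right, hX2, add_zero] at hinner
    have hd1 : d.1 = 0 := by
      rcases mul_eq_zero.mp hinner with h | h
      · exact h
      · exact absurd h (inner_self_ne_zero.mpr hXne)
    have hd2 : d.2 = 0 := by
      have h1 : (d.2 : E) = 0 := by
        have := hc
        rw [hd1, zero_smul, zero_add] at this
        exact this
      exact Subtype.ext h1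
    have : d = 0 := Prod.ext hd1 hd2
    have := sub_eq_zero.mp (hd ▸ this)
    exact this
  have hfr : Module.finrank ℝ (ℝ × W) = Module.finrank ℝ E := by
    have h1 : Module.finrank ℝ ↥(ℝ ∙ X) + Module.finrank ℝ ↥W = Module.finrank ℝ E :=
      Submodule.finrank_add_finrank_orthogonal (ℝ ∙ X)
    have h2 : Module.finrank ℝ ↥(ℝ ∙ X) = 1 := finrank_span_singleton hXne
    rw [Module.finrank_prod, Module.finrank_self]
    omega
  set Dlin : (ℝ × W) ≃ₗ[ℝ] E :=
    LinearMap.linearEquivOfInjective (Dl : (ℝ × W) →ₗ[ℝ] E) hinj hfr with hDlin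
  set DL : (ℝ × W) ≃L[ℝ] E := Dlin.toContinuousLinearEquiv with hDLdef
  have hDLeq : (DL : (ℝ × W) →L[ℝ] E) = Dl := by
    apply ContinuousLinearMap.ext
    intro q
    show Dlin q = Dl q
    simp [hDlin, LinearMap.linearEquivOfInjective_apply]
  -- the candidate chart map
  set jmap : (ℝ × W) → (ℝ × E) := fun q => (q.1, x₀ + (q.2 : E)) with hjm
  set g : (ℝ × W) → E := fun q => F (jmap q) with hgdef
  have hjstrict : HasStrictFDerivAt jmap J ((0 : ℝ), (0 : W)) := by
    have h1 : HasStrictFDerivAt (fun q : ℝ × W => (((0 : ℝ), x₀) + J q)) J ((0 : ℝ), (0 : W)) :=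
      J.hasStrictFDerivAt.const_add (((0 : ℝ), x₀))
    have h2 : jmap = fun q : ℝ × W => (((0 : ℝ), x₀) + J q) := by
      funext q2
      show (q2.1, x₀ + (q2.2 : E)) = ((0 : ℝ), x₀) + (q2.1, (q2.2 : E))
      rw [Prod.mk_add_mk, zero_add]
    rw [h2]
    exact h1
  have hgstrict : HasStrictFDerivAt g ((DL : (ℝ × W) →L[ℝ] E)) ((0 : ℝ), (0 : W)) := by
    have hj00 : jmap ((0 : ℝ), (0 : W)) = ((0 : ℝ), x₀) := by simp [hjm]
    have h1 : HasStrictFDerivAt F D (jmap ((0 : ℝ), (0 : W))) := by rw [hj00]; exact hDstrict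
    have h2 := h1.comp ((0 : ℝ), (0 : W)) hjstrict
    rw [hDLeq, hDl]
    exact h2
  set G := hgstrict.toOpenPartialHomeomorph g with hGdef
  have hGsource : ((0 : ℝ), (0 : W)) ∈ G.source := hgstrict.mem_toOpenPartialHomeomorph_source
  have hGcoe : ∀ y, G y = g y := fun y => rfl
  -- staying inside the chart
  obtain ⟨ρ₃, hρ₃pos, B, hBopen, hpB, hBprop⟩ : ∃ ρ₃ > 0, ∃ B : Set M, IsOpen B ∧ p ∈ B ∧
      ∀ σ : ℝ, |σ| < ρ₃ → ∀ z ∈ B, φ (σ, z) ∈ e.source := by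
    have hopen : IsOpen (φ ⁻¹' e.source) := (isOpen_extChartAt_source p).preimage hφ.continuous
    have hmem : ((0 : ℝ), p) ∈ φ ⁻¹' e.source := by
      simp only [mem_preimage, hzero]
      exact hx₀source
    obtain ⟨Av, Bv, hAv, hBv, h0Av, hpBv, hsubv⟩ := isOpen_prod_iff.mp hopen 0 p hmem
    obtain ⟨ρ₃, hρ₃, hball⟩ := Metric.isOpen_iff.mp hAv 0 h0Av
    exact ⟨ρ₃, hρ₃, Bv, hBv, hpBv, fun σ hσ z hz =>
      hsubv (mk_mem_prod (hball (by simpa [Real.dist_eq] using hσ)) hz)⟩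
  set Ω : Set W := {w : W | x₀ + (w : E) ∈ e.target ∧ e.symm (x₀ + (w : E)) ∈ B} with hΩ
  have hΩopen : IsOpen Ω := by
    have h1 : IsOpen (e.target ∩ e.symm ⁻¹' B) :=
      (continuousOn_extChartAt_symm p).isOpen_inter_preimage (isOpen_extChartAt_target p) hBopen
    have h2 : Continuous (fun w : W => x₀ + (w : E)) := continuous_const.add continuous_subtype_val
    have h3 : Ω = (fun w : W => x₀ + (w : E)) ⁻¹' (e.target ∩ e.symm ⁻¹' B) := rfl
    rw [h3]
    exact h1.preimage h2
  have h0Ω : (0 : W) ∈ Ω := by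
    constructor
    · simpa using hx₀target
    · simpa [hx₀, e.left_inv hx₀source] using hpB
  have hSopen : IsOpen (G.source ∩ ((Metric.ball (0 : ℝ) ρ₃) ×ˢ Ω)) :=
    G.open_source.inter (Metric.isOpen_ball.prod hΩopen)
  have hSmem : ((0 : ℝ), (0 : W)) ∈ G.source ∩ ((Metric.ball (0 : ℝ) ρ₃) ×ˢ Ω) :=
    ⟨hGsource, by simp [hρ₃pos], h0Ω⟩
  obtain ⟨δ, hδpos, hδsub⟩ := Metric.isOpen_iff.mp hSopen ((0 : ℝ), (0 : W)) hSmem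
  set r₀ := δ / 2 with hr₀
  have hr₀pos : 0 < r₀ := by positivity
  set s₀ : Set (ℝ × W) := (Ioo (-r₀) r₀) ×ˢ (Metric.ball (0 : W) r₀) with hs₀
  have hs₀sub : s₀ ⊆ G.source ∩ ((Metric.ball (0 : ℝ) ρ₃) ×ˢ Ω) := by
    intro y hy
    apply hδsub
    rw [Metric.mem_ball, Prod.dist_eq]
    apply max_lt
    · rw [Real.dist_eq, sub_zero]
      rw [hs₀] at hy
      have := hy.1
      rw [abs_lt]
      exact ⟨by linarith [this.1, hr₀pos] , by linarith [this.2, hr₀pos]⟩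
    · have : dist y.2 (0 : W) < r₀ := by
        rw [← Metric.mem_ball]
        exact hy.2
      calc dist y.2 (0 : W) < r₀ := this
        _ < δ := by rw [hr₀]; linarith
  have hs₀source : s₀ ⊆ G.source := fun y hy => (hs₀sub hy).1
  have hs₀open : IsOpen s₀ := isOpen_Ioo.prod Metric.isOpen_ball
  have hs₀mem : ((0 : ℝ), (0 : W)) ∈ s₀ := by
    constructor
    · simp [hr₀pos]
    · simpa using hr₀pos
  set qw : W → M := fun w => e.symm (x₀ + (w : E)) with hqw
  have hkey : ∀ y : ℝ × W, y ∈ s₀ → (G y = e (φ (y.1, qw y.2)) ∧ φ (y.1, qw y.2) ∈ e.source) := by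
    intro y hy
    obtain ⟨-, h1, h2⟩ := hs₀sub hy
    have h1' : |y.1| < ρ₃ := by simpa [Real.dist_eq] using h1
    have hin : φ (y.1, qw y.2) ∈ e.source := hBprop y.1 h1' _ h2.2
    exact ⟨rfl, hin⟩
  -- the flow box data
  set U : Set M := e.source ∩ e ⁻¹' (G '' s₀) with hUdef
  have hGimg_open : IsOpen (G '' s₀) := G.isOpen_image_of_subset_source hs₀open hs₀source
  have hUopen : IsOpen U :=
    (continuousOn_extChartAt p).isOpen_inter_preimage (isOpen_extChartAt_source p) hGimg_open
  set π : M → ℝ := fun a => (G.symm (e a)).1 with hπdef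
  set v : M → E := fun a => ((G.symm (e a)).2 : E) with hvdef
  have hGsymm_cont : ContinuousOn (fun a => G.symm (e a)) U := by
    apply G.continuousOn_symm.comp ((continuousOn_extChartAt p).mono inter_subset_left)
    intro a ha
    obtain ⟨-, y, hy, hye⟩ := ha
    rw [← hye]
    exact G.map_source (hs₀source hy)
  have hπcont : ContinuousOn π U := continuous_fst.comp_continuousOn hGsymm_cont
  have hvcont : ContinuousOn v U :=
    (continuous_subtype_val.comp continuous_snd).comp_continuousOn hGsymm_cont
  have hUstruct : ∀ a ∈ U, G.symm (e a) ∈ s₀ ∧ a = φ ((G.symm (e a)).1, qw (G.symm (e a)).2)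
      ∧ e a = G (G.symm (e a)) := by
    intro a ha
    obtain ⟨haso, y, hy, hye⟩ := ha
    have hyG : y ∈ G.source := hs₀source hy
    have h1 : G.symm (e a) = y := by rw [← hye, G.left_inv hyG]
    refine ⟨h1 ▸ hy, ?_, by rw [h1, hye]⟩
    have h2 := hkey y hy
    rw [h1]
    calc a = e.symm (e a) := (e.left_inv haso).symm
      _ = e.symm (G y) := by rw [hye]
      _ = φ (y.1, qw y.2) := by rw [h2.1, e.left_inv h2.2]
  have hii : ∀ a ∈ U, ∀ b ∈ U, v a = v b → φ (π b - π a, a) = b := by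
    intro a ha b hb hvv
    obtain ⟨hya, haeq, -⟩ := hUstruct a ha
    obtain ⟨hyb, hbeq, -⟩ := hUstruct b hb
    set σa := (G.symm (e a)).1 with hσa
    set wa := (G.symm (e a)).2 with hwa
    set σb := (G.symm (e b)).1 with hσb
    set wb := (G.symm (e b)).2 with hwb
    have hw : wa = wb := Subtype.ext hvv
    show φ (σb - σa, a) = b
    rw [haeq, ← hadd, sub_add_cancel, hw, ← hbeq]
  -- the inner box
  set U' : Set M := U ∩ π ⁻¹' (Ioo (-(r₀ / 2)) (r₀ / 2)) with hU'def
  have hU'open : IsOpen U' := hπcont.isOpen_inter_preimage hUopen isOpen_Ioo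
  have hGp : G ((0 : ℝ), (0 : W)) = x₀ := by
    have : g ((0 : ℝ), (0 : W)) = x₀ := by
      simp only [hgdef, hjm]
      rw [show x₀ + ((0 : W) : E) = x₀ by simp]
      exact hFid x₀ hx₀target
    rw [hGcoe]
    exact this
  have hpU : p ∈ U := by
    refine ⟨hx₀source, ⟨((0 : ℝ), (0 : W)), hs₀mem, ?_⟩⟩
    rw [hGp]
  have hπp : π p = 0 := by
    have h1 : G.symm (e p) = ((0 : ℝ), (0 : W)) := by
      rw [← hx₀, ← hGp, G.left_inv hGsource]
    rw [hπdef]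
    simp only []
    rw [h1]
  have hpU' : p ∈ U' := by
    refine ⟨hpU, ?_⟩
    simp only [mem_preimage, hπp, mem_Ioo]
    constructor <;> [linarith [hr₀pos]; linarith [hr₀pos]]
  have hi : ∀ a ∈ U', ∀ h : ℝ, |h| ≤ r₀ / 2 →
      (φ (h, a) ∈ U ∧ π (φ (h, a)) = π a + h ∧ v (φ (h, a)) = v a) := by
    intro a ha h hh
    obtain ⟨haU, haπ⟩ := ha
    obtain ⟨hya, haeq, haG⟩ := hUstruct a haU
    set y := G.symm (e a) with hy
    have hππ : π a = y.1 := rfl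
    have hyπ : |y.1| < r₀ / 2 := by
      rw [mem_preimage, mem_Ioo] at haπ
      rw [abs_lt]
      exact ⟨by linarith [haπ.1], by linarith [haπ.2]⟩
    set y' : ℝ × W := (y.1 + h, y.2) with hy'
    have hy's₀ : y' ∈ s₀ := by
      constructor
      · have : |y.1 + h| < r₀ := by
          calc |y.1 + h| ≤ |y.1| + |h| := abs_add_le _ _
            _ < r₀ / 2 + r₀ / 2 := by
                rcases lt_or_eq_of_le hh with h' | h'
                · exact add_lt_add hyπ h'
                · rw [h']; exact add_lt_add_of_lt_of_le hyπ le_rfl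
            _ = r₀ := by ring
        rw [abs_lt] at this
        exact ⟨this.1, this.2⟩
      · exact hya.2
    have hkey' := hkey y' hy's₀
    have hφa : φ (h, a) = φ (y'.1, qw y'.2) := by
      rw [haeq, ← hadd]
      have : h + y.1 = y'.1 := by rw [hy']; ring
      rw [this]
    have h1 : e (φ (h, a)) = G y' := by
      rw [hφa, hkey'.1]
    have h2 : φ (h, a) ∈ e.source := by rw [hφa]; exact hkey'.2
    have h3 : e (φ (h, a)) ∈ G '' s₀ := ⟨y', hy's₀, h1.symm⟩
    have h4 : G.symm (e (φ (h, a))) = y' := by rw [h1, G.left_inv (hs₀source hy's₀)]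
    refine ⟨⟨h2, h3⟩, ?_, ?_⟩
    · show (G.symm (e (φ (h, a)))).1 = π a + h
      rw [h4, hππ]
    · show ((G.symm (e (φ (h, a)))).2 : E) = v a
      rw [h4]
  exact ⟨U, U', r₀ / 2, π, v, hUopen, hU'open, hpU', inter_subset_left, by positivity,
    hπcont, hvcont, hi, hii⟩



end FlowBox

/-- A subset of a preconnected set that is relatively open with relatively open
complement and nonempty is everything. -/
lemma eq_of_relatively_clopen {K S : Set ℝ} (hK : IsPreconnected K) (hS : S ⊆ K)
    (h1 : ∀ t ∈ S, ∃ O : Set ℝ, IsOpen O ∧ t ∈ O ∧ K ∩ O ⊆ S)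
    (h2 : ∀ t ∈ K \ S, ∃ O : Set ℝ, IsOpen O ∧ t ∈ O ∧ K ∩ O ⊆ K \ S)
    (hne : S.Nonempty) : S = K := by
  by_contra hneq
  have hKS : (K \ S).Nonempty := by
    rw [Set.diff_nonempty]
    intro hsub
    exact hneq (le_antisymm hS hsub)
  choose O1 hO1open hO1mem hO1sub using h1
  choose O2 hO2open hO2mem hO2sub using h2
  set u := ⋃ (t : ℝ) (ht : t ∈ S), O1 t ht with hu
  set vv := ⋃ (t : ℝ) (ht : t ∈ K \ S), O2 t ht with hvv
  have huopen : IsOpen u := isOpen_iUnion fun t => isOpen_iUnion fun ht => hO1open t ht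
  have hvopen : IsOpen vv := isOpen_iUnion fun t => isOpen_iUnion fun ht => hO2open t ht
  have hcover : K ⊆ u ∪ vv := by
    intro z hz
    by_cases hzS : z ∈ S
    · exact Or.inl (mem_iUnion.mpr ⟨z, mem_iUnion.mpr ⟨hzS, hO1mem z hzS⟩⟩)
    · exact Or.inr (mem_iUnion.mpr ⟨z, mem_iUnion.mpr ⟨⟨hz, hzS⟩, hO2mem z ⟨hz, hzS⟩⟩⟩)
  have hne1 : (K ∩ u).Nonempty := by
    obtain ⟨z, hz⟩ := hne
    exact ⟨z, hS hz, mem_iUnion.mpr ⟨z, mem_iUnion.mpr ⟨hz, hO1mem z hz⟩⟩⟩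
  have hne2 : (K ∩ vv).Nonempty := by
    obtain ⟨z, hz⟩ := hKS
    exact ⟨z, hz.1, mem_iUnion.mpr ⟨z, mem_iUnion.mpr ⟨hz, hO2mem z hz⟩⟩⟩
  obtain ⟨z, hzK, hzu, hzv⟩ := hK u vv huopen hvopen hcover hne1 hne2
  obtain ⟨t1, ht1⟩ := mem_iUnion.mp hzu
  obtain ⟨ht1S, hzO1⟩ := mem_iUnion.mp ht1
  obtain ⟨t2, ht2⟩ := mem_iUnion.mp hzv
  obtain ⟨ht2S, hzO2⟩ := mem_iUnion.mp ht2
  have hzS : z ∈ S := hO1sub t1 ht1S ⟨hzK, hzO1⟩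
  have hzS' : z ∈ K \ S := hO2sub t2 ht2S ⟨hzK, hzO2⟩
  exact hzS'.2 hzS

end Stmt9Aux

open Stmt9Aux Set

/-- For a smooth everywhere-periodic nonsingular flow on a closed smooth manifold, if
a continuous homotopy of the inclusion of an orbit `L` sends `L × {t}` into a single
orbit `O t` for each `t ∈ [0,1]`, then it sends `L × {t}` onto the whole orbit `O t`
(the flow instance of Theorem 4.2 of Hurder–Walczak, after Hurder 2006). -/
theorem stmt9 {n : ℕ} {M : Type*} [TopologicalSpace M]
    [ChartedSpace (EuclideanSpace ℝ (Fin n)) M]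
    [IsManifold (𝓡 n) ((⊤ : ℕ∞) : WithTop ℕ∞) M] [CompactSpace M]
    (φ : ℝ × M → M)
    (hφ : ContMDiff ((𝓘(ℝ, ℝ)).prod (𝓡 n)) (𝓡 n) (⊤ : ℕ∞) φ)
    (hzero : ∀ x : M, φ (0, x) = x)
    (hadd : ∀ s t : ℝ, ∀ x : M, φ (s + t, x) = φ (s, φ (t, x)))
    (hper : ∀ x : M, ∃ T > (0:ℝ), φ (T, x) = x)
    (hnonfix : ∀ x : M, ∃ t : ℝ, φ (t, x) ≠ x)
    (x₀ : M) (L : Set M) (hL : L = {y : M | ∃ t : ℝ, φ (t, x₀) = y})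
    (H : M → ℝ → M)
    (hHcont : ContinuousOn (fun p : M × ℝ => H p.1 p.2) (L ×ˢ Set.Icc (0:ℝ) 1))
    (hH0 : ∀ x ∈ L, H x 0 = x)
    (O : ℝ → Set M)
    (hO : ∀ t ∈ Set.Icc (0:ℝ) 1, ∃ y : M, O t = {z : M | ∃ s : ℝ, φ (s, y) = z})
    (hHO : ∀ t ∈ Set.Icc (0:ℝ) 1, ∀ x ∈ L, H x t ∈ O t) :
    ∀ t ∈ Set.Icc (0:ℝ) 1, (fun x => H x t) '' L = O t := by
  classical
  have hx₀L : x₀ ∈ L := by rw [hL]; exact ⟨0, hzero x₀⟩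
  have hφsL : ∀ s : ℝ, φ (s, x₀) ∈ L := by intro s; rw [hL]; exact ⟨s, rfl⟩
  -- flow boxes
  have hbox := fun p : M => flowbox φ hφ hzero hadd hnonfix p
  choose U U' r π v hUopen hU'open hpU' hU'U hrpos hπcont hvcont hbox1 hbox2 using hbox
  -- a uniform lower bound for periods
  have hcover : (univ : Set M) ⊆ ⋃ p : M, U' p := fun z _ => mem_iUnion.mpr ⟨z, hpU' z⟩
  obtain ⟨bs, hbs⟩ := isCompact_univ.elim_finite_subcover U' hU'open hcover
  have hbsne : bs.Nonempty := by
    by_contra hh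
    rw [Finset.not_nonempty_iff_eq_empty] at hh
    have h1 := hbs (mem_univ x₀)
    rw [hh] at h1
    simpa using h1
  set ε₀ := bs.inf' hbsne r with hε₀def
  have hε₀pos : 0 < ε₀ := by
    rw [hε₀def, Finset.lt_inf'_iff]
    exact fun b _ => hrpos b
  have hsmall : ∀ z : M, ∀ h : ℝ, |h| ≤ ε₀ → φ (h, z) = z → h = 0 := by
    intro z h hh hperz
    have h1 := hbs (mem_univ z)
    rw [mem_iUnion₂] at h1
    obtain ⟨pz, hpzs, hpz⟩ := h1
    have hrle : ε₀ ≤ r pz := Finset.inf'_le r hpzs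
    have h2 := (hbox1 pz z hpz h (le_trans hh hrle)).2.1
    rw [hperz] at h2
    linarith
  have hminper : ∀ z : M, ∃ T : ℝ, ε₀ ≤ T ∧ φ (T, z) = z ∧
      ∀ s', φ (s', z) = z → ∃ k : ℤ, s' = k * T :=
    fun z => exists_min_period hzero hadd hε₀pos hsmall z (hper z)
  -- base point of each orbit
  set y : ℝ → M := fun t => H x₀ t with hy
  have hOt : ∀ t ∈ Icc (0:ℝ) 1, O t = {z : M | ∃ s : ℝ, φ (s, y t) = z} := by
    intro t ht
    obtain ⟨w, hw⟩ := hO t ht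
    have hyO : y t ∈ O t := hHO t ht x₀ hx₀L
    rw [hw] at hyO ⊢
    obtain ⟨u, hu⟩ := hyO
    ext z
    constructor
    · rintro ⟨s, rfl⟩
      refine ⟨s - u, ?_⟩
      rw [← hu, ← hadd, sub_add_cancel]
    · rintro ⟨s, rfl⟩
      exact ⟨s + u, by rw [hadd, hu]⟩
  -- minimal period of the base orbit
  obtain ⟨T₀, hT₀ε, hT₀per, hT₀gen⟩ := hminper x₀
  have hT₀pos : 0 < T₀ := lt_of_lt_of_le hε₀pos hT₀ε
  -- the base loop family
  set Γ : ℝ → ℝ → M := fun s t => H (φ (s, x₀)) t with hΓ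
  have hΓcont : ContinuousOn (fun q : ℝ × ℝ => Γ q.1 q.2) (univ ×ˢ Icc (0:ℝ) 1) := by
    have hf : ContinuousOn (fun q : ℝ × ℝ => ((φ (q.1, x₀), q.2) : M × ℝ)) (univ ×ˢ Icc (0:ℝ) 1) :=
      ((hφ.continuous.comp (continuous_fst.prodMk continuous_const)).prodMk
        continuous_snd).continuousOn
    have hmap : MapsTo (fun q : ℝ × ℝ => ((φ (q.1, x₀), q.2) : M × ℝ))
        (univ ×ˢ Icc (0:ℝ) 1) (L ×ˢ Icc (0:ℝ) 1) := fun q hq => ⟨hφsL q.1, hq.2⟩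
    exact hHcont.comp hf hmap
  have hΓs : ∀ t ∈ Icc (0:ℝ) 1, Continuous (fun s => Γ s t) := by
    intro t ht
    rw [← continuousOn_univ]
    have hf : ContinuousOn (fun s : ℝ => ((s, t) : ℝ × ℝ)) (univ : Set ℝ) :=
      (continuous_id.prodMk continuous_const).continuousOn
    have hmap : MapsTo (fun s : ℝ => ((s, t) : ℝ × ℝ)) (univ : Set ℝ)
        (univ ×ˢ Icc (0:ℝ) 1) := fun s _ => ⟨trivial, ht⟩
    exact hΓcont.comp hf hmap
  have hΓt : ∀ s : ℝ, ContinuousOn (fun t => Γ s t) (Icc (0:ℝ) 1) := by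
    intro s
    have hf : ContinuousOn (fun t : ℝ => ((s, t) : ℝ × ℝ)) (Icc (0:ℝ) 1) :=
      (continuous_const.prodMk continuous_id).continuousOn
    have hmap : MapsTo (fun t : ℝ => ((s, t) : ℝ × ℝ)) (Icc (0:ℝ) 1)
        (univ ×ˢ Icc (0:ℝ) 1) := fun t htt => ⟨trivial, htt⟩
    exact hΓcont.comp hf hmap
  have hΓ0 : ∀ t, Γ 0 t = y t := by intro t; rw [hΓ, hy]; simp only [hzero]
  have hΓT₀ : ∀ t, Γ T₀ t = y t := by intro t; rw [hΓ, hy]; simp only [hT₀per]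
  -- lifts
  set IsLift : ℝ → ℝ → (ℝ → ℝ) → Prop := fun t Wd Θ =>
    ContinuousOn Θ (Icc 0 T₀) ∧ Θ 0 = 0 ∧ Θ T₀ = Wd ∧
      ∀ s ∈ Icc 0 T₀, φ (Θ s, y t) = Γ s t with hIsLift
  -- lift values are periods of `y t`
  have hlift_per : ∀ t, ∀ Wd Θ, IsLift t Wd Θ → φ (Wd, y t) = y t := by
    intro t Wd Θ hl
    have h1 := hl.2.2.2 T₀ ⟨le_refl 0 |>.trans hT₀pos.le, le_refl T₀⟩
    rw [hl.2.2.1, hΓT₀] at h1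
    exact h1
  -- uniqueness of lift values
  have hlift_unique : ∀ t, ∀ W1 W2 Θ1 Θ2, IsLift t W1 Θ1 → IsLift t W2 Θ2 → W1 = W2 := by
    intro t W1 W2 Θ1 Θ2 h1 h2
    obtain ⟨T, hTε, hTper, hTgen⟩ := hminper (y t)
    have hTpos : 0 < T := lt_of_lt_of_le hε₀pos hTε
    have hd : ∀ s ∈ Icc (0:ℝ) T₀, ∃ k : ℤ, Θ1 s - Θ2 s = k * T := by
      intro s hs
      have e1 := h1.2.2.2 s hs
      have e2 := h2.2.2.2 s hs
      have h3 : φ (Θ1 s - Θ2 s, φ (Θ2 s, y t)) = φ (Θ2 s, y t) := by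
        rw [← hadd, sub_add_cancel, e1, e2]
      exact hTgen _ (per_orbit' hzero hadd h3)
    have hdcont : ContinuousOn (fun s => Θ1 s - Θ2 s) (Icc 0 T₀) := h1.1.sub h2.1
    have hdzero : ∀ s ∈ Icc (0:ℝ) T₀, Θ1 s - Θ2 s = 0 := by
      intro s hs
      by_contra hne
      obtain ⟨k, hk⟩ := hd s hs
      have hk0 : k ≠ 0 := by
        intro hk0
        rw [hk0] at hk
        simp at hk
        exact hne hk
      have habs : T ≤ |Θ1 s - Θ2 s| := by
        rw [hk, abs_mul, abs_of_pos hTpos]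
        have h1k : (1:ℝ) ≤ |(k:ℝ)| := by
          rw [← Int.cast_abs]
          exact_mod_cast Int.one_le_abs hk0
        nlinarith [hTpos]
      -- IVT gives a value T/2 (or -T/2), contradiction
      have hsub : uIcc (0:ℝ) s ⊆ Icc 0 T₀ := by
        rw [uIcc_of_le hs.1]
        exact Icc_subset_Icc (le_refl 0) hs.2
      have hcont' : ContinuousOn (fun s => Θ1 s - Θ2 s) (uIcc 0 s) := hdcont.mono hsub
      have h0 : Θ1 0 - Θ2 0 = 0 := by rw [h1.2.1, h2.2.1, sub_zero]
      set c : ℝ := if 0 ≤ Θ1 s - Θ2 s then T/2 else -(T/2) with hc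
      have hcmem : c ∈ uIcc ((fun s => Θ1 s - Θ2 s) 0) ((fun s => Θ1 s - Θ2 s) s) := by
        simp only [h0]
        rcases le_or_gt 0 (Θ1 s - Θ2 s) with hpos | hneg
        · rw [hc, if_pos hpos]
          rw [abs_of_nonneg hpos] at habs
          rw [uIcc_of_le (by linarith)]
          constructor <;> [linarith; linarith]
        · rw [hc, if_neg (not_le.mpr hneg)]
          rw [abs_of_neg hneg] at habs
          rw [uIcc_of_ge (by linarith)]
          constructor <;> [linarith; linarith]
      obtain ⟨s', hs'mem, hs'⟩ := intermediate_value_uIcc hcont' hcmem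
      obtain ⟨k', hk'⟩ := hd s' (hsub hs'mem)
      have hs'' : Θ1 s' - Θ2 s' = c := hs'
      rw [hs''] at hk'
      have : |c| = T/2 := by
        rw [hc]
        rcases le_or_gt 0 (Θ1 s - Θ2 s) with hpos | hneg
        · rw [if_pos hpos, abs_of_pos (by linarith)]
        · rw [if_neg (not_le.mpr hneg), abs_of_neg (by linarith), neg_neg]
      rcases eq_or_ne k' 0 with hk'0 | hk'0
      · rw [hk'0] at hk'
        simp at hk'
        rw [hk'] at this
        simp at this
        linarith
      · have h5 : T ≤ |c| := by
          rw [hk', abs_mul, abs_of_pos hTpos]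
          have : (1:ℝ) ≤ |(k':ℝ)| := by
            rw [← Int.cast_abs]
            exact_mod_cast Int.one_le_abs hk'0
          nlinarith [hTpos]
        rw [this] at h5
        linarith
    have h6 := hdzero T₀ ⟨hT₀pos.le, le_refl T₀⟩
    rw [h1.2.2.1, h2.2.2.1] at h6
    linarith [sub_eq_zero.mp h6]
  -- finitely many transverse values of an orbit in a box
  have hfinite : ∀ t ∈ Icc (0:ℝ) 1, ∀ p : M,
      ((v p) '' ({z : M | ∃ s : ℝ, φ (s, y t) = z} ∩ U' p)).Finite := by
    intro t ht p
    obtain ⟨T, hTε, hTper, hTgen⟩ := hminper (y t)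
    have hTpos : 0 < T := lt_of_lt_of_le hε₀pos hTε
    obtain ⟨K, hK⟩ := exists_nat_gt (T / r p)
    have hKr : T < K * r p := by
      rw [div_lt_iff₀ (hrpos p)] at hK
      linarith
    have hsub : (v p) '' ({z : M | ∃ s : ℝ, φ (s, y t) = z} ∩ U' p) ⊆
        ⋃ k ∈ Finset.range K, (v p) '' {z : M | z ∈ U' p ∧
          ∃ c ∈ Icc ((k : ℝ) * r p) (((k : ℝ) + 1) * r p), φ (c, y t) = z} := by
      rintro val ⟨z, ⟨⟨s, rfl⟩, hzU'⟩, rfl⟩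
      set mz : ℤ := ⌊s / T⌋ with hmz
      set c : ℝ := s - mz * T with hcz
      have hc0 : 0 ≤ c := by
        rw [hcz]
        have h1 : (mz : ℝ) ≤ s / T := Int.floor_le _
        have h2 := mul_le_mul_of_nonneg_right h1 hTpos.le
        rw [div_mul_cancel₀ _ hTpos.ne'] at h2
        linarith
      have hcT : c < T := by
        rw [hcz]
        have h2 : s / T < mz + 1 := Int.lt_floor_add_one _
        have h3 := mul_lt_mul_of_pos_right h2 hTpos
        rw [div_mul_cancel₀ _ hTpos.ne'] at h3
        nlinarith
      have hφc : φ (c, y t) = φ (s, y t) := by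
        have hper' : φ (-(mz * T : ℝ), y t) = y t := by
          rw [show (-(mz * T : ℝ)) = ((-mz : ℤ) : ℝ) * T by push_cast; ring]
          exact per_zsmul hzero hadd hTper (-mz)
        rw [hcz, sub_eq_add_neg, hadd, hper']
      set k : ℕ := ⌊c / r p⌋.toNat with hkz
      have hk0 : (0:ℤ) ≤ ⌊c / r p⌋ := Int.floor_nonneg.mpr (div_nonneg hc0 (hrpos p).le)
      have hkc : (k : ℝ) = ((⌊c / r p⌋ : ℤ) : ℝ) := by
        rw [hkz]
        exact_mod_cast congrArg (fun z : ℤ => (z : ℝ)) (Int.toNat_of_nonneg hk0)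
      have hfl : (k : ℝ) ≤ c / r p := by rw [hkc]; exact Int.floor_le _
      have hfl2 : c / r p < (k : ℝ) + 1 := by rw [hkc]; exact Int.lt_floor_add_one _
      have hlow : (k : ℝ) * r p ≤ c := by
        have := mul_le_mul_of_nonneg_right hfl (hrpos p).le
        rwa [div_mul_cancel₀ _ (hrpos p).ne'] at this
      have hhigh : c ≤ ((k : ℝ) + 1) * r p := by
        have := mul_lt_mul_of_pos_right hfl2 (hrpos p)
        rw [div_mul_cancel₀ _ (hrpos p).ne'] at this
        linarith
      have hkrange : k < K := by
        have h5 : (k : ℝ) * r p < (K : ℝ) * r p := by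
          calc (k : ℝ) * r p ≤ c := hlow
            _ < T := hcT
            _ < K * r p := hKr
        have h6 : (k : ℝ) < (K : ℝ) := lt_of_mul_lt_mul_right h5 (hrpos p).le
        exact_mod_cast h6
      apply Set.mem_biUnion (Finset.mem_range.mpr hkrange)
      exact ⟨φ (s, y t), ⟨hzU', c, ⟨hlow, hhigh⟩, hφc⟩, rfl⟩
    apply Set.Finite.subset ?_ hsub
    apply Set.Finite.biUnion (Finset.range K).finite_toSet
    intro k _
    apply Set.Subsingleton.finite
    rintro val1 ⟨z1, ⟨hz1U, c1, hc1, rfl⟩, rfl⟩ val2 ⟨z2, ⟨hz2U, c2, hc2, rfl⟩, rfl⟩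
    have key : ∀ c3 c4 : ℝ, c3 ∈ Icc ((k : ℝ) * r p) (((k : ℝ) + 1) * r p) →
        c4 ∈ Icc ((k : ℝ) * r p) (((k : ℝ) + 1) * r p) → c3 ≤ c4 →
        φ (c3, y t) ∈ U' p → v p (φ (c4, y t)) = v p (φ (c3, y t)) := by
      intro c3 c4 hm3 hm4 h34 hU3
      have h7 : φ (c4, y t) = φ (c4 - c3, φ (c3, y t)) := by
        rw [← hadd, sub_add_cancel]
      rw [h7]
      refine (hbox1 p _ hU3 (c4 - c3) ?_).2.2
      rw [abs_of_nonneg (by linarith)]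
      have := hm3.1
      have := hm4.2
      linarith
    rcases le_total c1 c2 with h12 | h21
    · exact (key c1 c2 hc1 hc2 h12 hz1U).symm
    · exact key c2 c1 hc2 hc1 h21 hz2U
  -- local existence of lifts with locally continuous value
  have hlocal : ∀ t₀ ∈ Icc (0:ℝ) 1, ∃ V : Set ℝ, IsOpen V ∧ t₀ ∈ V ∧
      ∃ Wf : ℝ → ℝ, ContinuousOn Wf (Icc 0 1 ∩ V) ∧
        ∀ t ∈ Icc (0:ℝ) 1 ∩ V, ∃ Θ, IsLift t (Wf t) Θ := by
    intro t₀ ht₀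
    -- Lebesgue number for the cover of the base loop by boxes
    have hcov : Icc (0:ℝ) T₀ ⊆ ⋃ p : M, (fun s => Γ s t₀) ⁻¹' (U' p) :=
      fun s _ => mem_iUnion.mpr ⟨Γ s t₀, hpU' _⟩
    have hopen' : ∀ p : M, IsOpen ((fun s => Γ s t₀) ⁻¹' (U' p)) :=
      fun p => (hU'open p).preimage (hΓs t₀ ht₀)
    obtain ⟨δ, hδpos, hδ⟩ := lebesgue_number_lemma_of_metric isCompact_Icc hopen' hcov
    obtain ⟨m, hm⟩ := exists_nat_gt (T₀ / δ)
    have hm0 : 0 < (m : ℝ) := lt_of_le_of_lt (by positivity) hm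
    set a : ℕ → ℝ := fun i => i * T₀ / m with ha
    have ha0 : a 0 = 0 := by simp [ha]
    have ham : a m = T₀ := by
      rw [ha]
      field_simp
    have hamono : ∀ i : ℕ, a i < a (i + 1) := by
      intro i
      rw [ha]
      apply div_lt_div_of_pos_right ?_ hm0
      push_cast
      nlinarith [hT₀pos]
    have harange : ∀ i : ℕ, i ≤ m → a i ∈ Icc (0:ℝ) T₀ := by
      intro i hi
      constructor
      · rw [ha]; positivity
      · rw [ha, div_le_iff₀ hm0]
        have : (i : ℝ) ≤ (m : ℝ) := by exact_mod_cast hi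
        nlinarith [hT₀pos]
    have hastep : ∀ i : ℕ, a (i + 1) - a i = T₀ / m := by
      intro i
      rw [ha]
      push_cast
      field_simp
      ring
    have haseg : ∀ i : ℕ, i < m → ∃ p : M, ∀ s ∈ Icc (a i) (a (i + 1)), Γ s t₀ ∈ U' p := by
      intro i hi
      obtain ⟨p, hp⟩ := hδ (a i) (harange i hi.le)
      refine ⟨p, fun s hs => hp ?_⟩
      rw [Metric.mem_ball, Real.dist_eq]
      have h1 : T₀ / m < δ := by
        rw [div_lt_iff₀ hm0]
        rw [div_lt_iff₀ hδpos] at hm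
        linarith
      have h2 := hastep i
      rw [abs_of_nonneg (by linarith [hs.1])]
      have := hs.2
      linarith
    choose β hβ using haseg
    -- boxes also work for nearby parameters
    have hVi : ∀ i : ℕ, ∀ hi : i < m, ∃ Vi : Set ℝ, IsOpen Vi ∧ t₀ ∈ Vi ∧
        ∀ t ∈ Icc (0:ℝ) 1 ∩ Vi, ∀ s ∈ Icc (a i) (a (i + 1)), Γ s t ∈ U' (β i hi) := by
      intro i hi
      set C : Set (ℝ × ℝ) := ((Icc (a i) (a (i + 1))) ×ˢ (Icc (0:ℝ) 1)) ∩
        ((fun q : ℝ × ℝ => Γ q.1 q.2) ⁻¹' (U' (β i hi))ᶜ) with hC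
      have hCclosed : IsClosed C := by
        apply ContinuousOn.preimage_isClosed_of_isClosed
          (hΓcont.mono (prod_mono_left (subset_univ _)))
          (isClosed_Icc.prod isClosed_Icc)
          (hU'open (β i hi)).isClosed_compl
      have hCcomp : IsCompact C :=
        (isCompact_Icc.prod isCompact_Icc).of_isClosed_subset hCclosed inter_subset_left
      have hproj : IsClosed (Prod.snd '' C) := (hCcomp.image continuous_snd).isClosed
      refine ⟨(Prod.snd '' C)ᶜ, hproj.isOpen_compl, ?_, ?_⟩
      · rintro ⟨q, hqC, hq2⟩
        have hq : q = (q.1, t₀) := Prod.ext rfl hq2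
        rw [hq] at hqC
        exact hqC.2 (hβ i hi q.1 hqC.1.1)
      · rintro t ⟨htIcc, htV⟩ s hs
        by_contra hcon
        exact htV ⟨(s, t), ⟨⟨hs, htIcc⟩, hcon⟩, rfl⟩
    choose Vi hViopen hVit₀ hVisub using hVi
    -- non-dependent versions
    set Pd : ℕ → M := fun i => if hi : i < m then β i hi else x₀ with hPd
    set Vd : ℕ → Set ℝ := fun i => if hi : i < m then Vi i hi else univ with hVd
    have hVdopen : ∀ i, IsOpen (Vd i) := by
      intro i
      by_cases hi : i < m
      · simp only [hVd, dif_pos hi]; exact hViopen i hi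
      · simp only [hVd, dif_neg hi]; exact isOpen_univ
    have hVdt₀ : ∀ i, t₀ ∈ Vd i := by
      intro i
      by_cases hi : i < m
      · simp only [hVd, dif_pos hi]; exact hVit₀ i hi
      · simp only [hVd, dif_neg hi]; trivial
    set V : Set ℝ := ⋂ i ∈ Finset.range m, Vd i with hV
    have hVopen : IsOpen V := isOpen_biInter_finset fun i _ => hVdopen i
    have hVt₀ : t₀ ∈ V := by
      rw [hV]
      exact Set.mem_biInter fun i _ => hVdt₀ i
    have hseg : ∀ t ∈ Icc (0:ℝ) 1 ∩ V, ∀ i : ℕ, i < m →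
        ∀ s ∈ Icc (a i) (a (i + 1)), Γ s t ∈ U' (Pd i) := by
      rintro t ⟨htIcc, htV⟩ i hi s hs
      have h1 : t ∈ Vd i := by
        rw [hV] at htV
        exact Set.mem_iInter₂.mp htV i (Finset.mem_range.mpr hi)
      simp only [hVd, dif_pos hi] at h1
      simp only [hPd, dif_pos hi]
      exact hVisub i hi t ⟨htIcc, h1⟩ s hs
    -- the winding value
    set Wf : ℝ → ℝ := fun t => ∑ i ∈ Finset.range m,
      (π (Pd i) (Γ (a (i + 1)) t) - π (Pd i) (Γ (a i) t)) with hWf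
    have haiIcc : ∀ i : ℕ, i < m → a i ∈ Icc (a i) (a (i + 1)) :=
      fun i hi => ⟨le_refl _, (hamono i).le⟩
    have hai1Icc : ∀ i : ℕ, i < m → a (i + 1) ∈ Icc (a i) (a (i + 1)) :=
      fun i hi => ⟨(hamono i).le, le_refl _⟩
    have hWfcont : ContinuousOn Wf (Icc (0:ℝ) 1 ∩ V) := by
      apply continuousOn_finset_sum
      intro i hi
      have hi' : i < m := Finset.mem_range.mp hi
      have hc1 : ContinuousOn (fun t => π (Pd i) (Γ (a (i + 1)) t)) (Icc (0:ℝ) 1 ∩ V) := by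
        apply (hπcont (Pd i)).comp ((hΓt (a (i + 1))).mono inter_subset_left)
        intro t htt
        exact hU'U _ (hseg t htt i hi' (a (i + 1)) (hai1Icc i hi'))
      have hc2 : ContinuousOn (fun t => π (Pd i) (Γ (a i) t)) (Icc (0:ℝ) 1 ∩ V) := by
        apply (hπcont (Pd i)).comp ((hΓt (a i)).mono inter_subset_left)
        intro t htt
        exact hU'U _ (hseg t htt i hi' (a i) (haiIcc i hi'))
      exact hc1.sub hc2
    -- build the lift by induction over the partition
    have hbuild : ∀ t ∈ Icc (0:ℝ) 1 ∩ V, ∀ i : ℕ, i ≤ m → ∃ Θ : ℝ → ℝ,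
        ContinuousOn Θ (Icc 0 (a i)) ∧ Θ 0 = 0 ∧
        Θ (a i) = (∑ j ∈ Finset.range i,
          (π (Pd j) (Γ (a (j + 1)) t) - π (Pd j) (Γ (a j) t))) ∧
        ∀ s ∈ Icc 0 (a i), φ (Θ s, y t) = Γ s t := by
      intro t htV i
      induction i with
      | zero =>
          intro _
          refine ⟨fun _ => 0, continuousOn_const, rfl, by simp [ha0], ?_⟩
          intro s hs
          rw [ha0] at hs
          have hs0 : s = 0 := le_antisymm hs.2 hs.1
          rw [hs0, hzero, hΓ0]
      | succ i ih =>
          intro hi1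
          have hi : i < m := hi1
          obtain ⟨Θ, hΘc, hΘ0, hΘai, hΘlift⟩ := ih (le_of_lt hi)
          have horb : ∀ s : ℝ, Γ s t ∈ {z : M | ∃ s' : ℝ, φ (s', y t) = z} := by
            intro s
            have h1 : Γ s t ∈ O t := hHO t htV.1 _ (hφsL s)
            rw [hOt t htV.1] at h1
            exact h1
          have hvconst : ∀ s ∈ Icc (a i) (a (i + 1)),
              v (Pd i) (Γ s t) = v (Pd i) (Γ (a i) t) := by
            intro s hs
            have hvΓ : ContinuousOn (fun s => v (Pd i) (Γ s t)) (Icc (a i) (a (i + 1))) := by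
              apply (hvcont (Pd i)).comp ((hΓs t htV.1).continuousOn)
              intro s' hs'
              exact hU'U _ (hseg t htV i hi s' hs')
            exact constant_of_finite_image isPreconnected_Icc hvΓ
              (hfinite t htV.1 (Pd i))
              (fun s' hs' => ⟨Γ s' t, ⟨horb s', hseg t htV i hi s' hs'⟩, rfl⟩)
              hs (haiIcc i hi)
          have ha_i0 : 0 ≤ a i := (harange i (le_of_lt hi)).1
          set Θ' : ℝ → ℝ := fun s => if s ≤ a i then Θ s
            else Θ (a i) + (π (Pd i) (Γ s t) - π (Pd i) (Γ (a i) t)) with hΘ'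
          have hcontseg : ContinuousOn
              (fun s => Θ (a i) + (π (Pd i) (Γ s t) - π (Pd i) (Γ (a i) t)))
              (Icc (a i) (a (i + 1))) := by
            apply continuousOn_const.add
            apply ContinuousOn.sub ?_ continuousOn_const
            apply (hπcont (Pd i)).comp ((hΓs t htV.1).continuousOn)
            intro s' hs'
            exact hU'U _ (hseg t htV i hi s' hs')
          have hglue : ContinuousOn Θ' (Icc 0 (a (i + 1))) := by
            rw [hΘ']
            exact glue_continuousOn ha_i0 (hamono i).le hΘc hcontseg (by simp)
          refine ⟨Θ', hglue, ?_, ?_, ?_⟩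
          · rw [hΘ']
            simp only [if_pos ha_i0]
            exact hΘ0
          · rw [hΘ']
            simp only [if_neg (not_le.mpr (hamono i))]
            rw [hΘai, Finset.sum_range_succ]
          · intro s hs
            by_cases hcase : s ≤ a i
            · rw [hΘ']
              simp only [if_pos hcase]
              exact hΘlift s ⟨hs.1, hcase⟩
            · push_neg at hcase
              have hsmem : s ∈ Icc (a i) (a (i + 1)) := ⟨hcase.le, hs.2⟩
              rw [hΘ']
              simp only [if_neg (not_le.mpr hcase)]
              rw [add_comm, hadd, hΘlift (a i) ⟨ha_i0, le_refl _⟩]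
              exact hbox2 (Pd i) _ (hU'U _ (hseg t htV i hi (a i) (haiIcc i hi)))
                _ (hU'U _ (hseg t htV i hi s hsmem)) (hvconst s hsmem).symm
    refine ⟨V, hVopen, hVt₀, Wf, hWfcont, ?_⟩
    intro t htV
    obtain ⟨Θ, h1, h2, h3, h4⟩ := hbuild t htV m (le_refl m)
    rw [ham] at h1 h3 h4
    exact ⟨Θ, h1, h2, h3, h4⟩
  -- the set of parameters with nonvanishing winding
  set S : Set ℝ := {t ∈ Icc (0:ℝ) 1 | ∃ Wd Θ, IsLift t Wd Θ ∧ Wd ≠ 0} with hS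
  have hS0 : (0:ℝ) ∈ S := by
    refine ⟨⟨le_refl 0, zero_le_one⟩, T₀, id, ⟨continuousOn_id, rfl, rfl, ?_⟩, hT₀pos.ne'⟩
    intro s hs
    have h1 : y 0 = x₀ := hH0 x₀ hx₀L
    have h2 : Γ s 0 = φ (s, x₀) := hH0 _ (hφsL s)
    simp only [id_eq]
    rw [h1, h2]
  have hSIcc : S = Icc (0:ℝ) 1 := by
    apply eq_of_relatively_clopen isPreconnected_Icc (fun t ht => ht.1)
    · -- relatively open
      intro t₀ ht₀
      obtain ⟨ht₀Icc, Wd₀, Θ₀, hlift₀, hWd₀⟩ := ht₀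
      obtain ⟨V, hVopen, ht₀V, Wf, hWfcont, hWflift⟩ := hlocal t₀ ht₀Icc
      have hWft₀ : Wf t₀ ≠ 0 := by
        obtain ⟨Θ, hΘ⟩ := hWflift t₀ ⟨ht₀Icc, ht₀V⟩
        rw [hlift_unique t₀ (Wf t₀) Wd₀ Θ Θ₀ hΘ hlift₀]
        exact hWd₀
      -- |Wf| > ε₀ near t₀
      have hWfbig : ε₀ < |Wf t₀| := by
        rcases lt_or_ge ε₀ (|Wf t₀|) with h | h
        · exact h
        · exact absurd (hsmall (y t₀) (Wf t₀) h
            (hlift_per t₀ _ _ ((hWflift t₀ ⟨ht₀Icc, ht₀V⟩).choose_spec)))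
            hWft₀
      have hev : {t | ε₀ < |Wf t|} ∈ nhdsWithin t₀ (Icc (0:ℝ) 1 ∩ V) := by
        apply (hWfcont t₀ ⟨ht₀Icc, ht₀V⟩).preimage_mem_nhdsWithin (t := {x : ℝ | ε₀ < |x|})
        exact (isOpen_lt continuous_const continuous_abs).mem_nhds hWfbig
      rw [mem_nhdsWithin] at hev
      obtain ⟨Ov, hOvopen, ht₀Ov, hOvsub⟩ := hev
      refine ⟨Ov ∩ V, hOvopen.inter hVopen, ⟨ht₀Ov, ht₀V⟩, ?_⟩
      rintro t ⟨htIcc, htOv, htV⟩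
      obtain ⟨Θ, hΘ⟩ := hWflift t ⟨htIcc, htV⟩
      refine ⟨htIcc, Wf t, Θ, hΘ, ?_⟩
      have h7 : ε₀ < |Wf t| := hOvsub ⟨htOv, htIcc, htV⟩
      intro h8
      rw [h8] at h7
      simp at h7
      linarith
    · -- complement relatively open
      rintro t₀ ⟨ht₀Icc, ht₀S⟩
      obtain ⟨V, hVopen, ht₀V, Wf, hWfcont, hWflift⟩ := hlocal t₀ ht₀Icc
      have hWft₀ : Wf t₀ = 0 := by
        by_contra hne
        exact ht₀S ⟨ht₀Icc, Wf t₀, (hWflift t₀ ⟨ht₀Icc, ht₀V⟩).choose,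
          (hWflift t₀ ⟨ht₀Icc, ht₀V⟩).choose_spec, hne⟩
      have hev : {t | |Wf t| < ε₀} ∈ nhdsWithin t₀ (Icc (0:ℝ) 1 ∩ V) := by
        apply (hWfcont t₀ ⟨ht₀Icc, ht₀V⟩).preimage_mem_nhdsWithin (t := {x : ℝ | |x| < ε₀})
        apply (isOpen_lt continuous_abs continuous_const).mem_nhds
        simp only [mem_setOf_eq, hWft₀, abs_zero]
        exact hε₀pos
      rw [mem_nhdsWithin] at hev
      obtain ⟨Ov, hOvopen, ht₀Ov, hOvsub⟩ := hev
      refine ⟨Ov ∩ V, hOvopen.inter hVopen, ⟨ht₀Ov, ht₀V⟩, ?_⟩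
      rintro t ⟨htIcc, htOv, htV⟩
      refine ⟨htIcc, ?_⟩
      rintro ⟨-, Wd, Θ, hΘ, hWdne⟩
      obtain ⟨Θ', hΘ'⟩ := hWflift t ⟨htIcc, htV⟩
      have h9 : Wd = Wf t := hlift_unique t Wd (Wf t) Θ Θ' hΘ hΘ'
      have h10 : |Wf t| < ε₀ := hOvsub ⟨htOv, htIcc, htV⟩
      exact hWdne (h9 ▸ hsmall (y t) (Wf t) h10.le (hlift_per t _ _ hΘ'))
    · exact ⟨0, hS0⟩
  -- conclusion: surjectivity for each t
  intro t ht
  have htS : t ∈ S := hSIcc ▸ ht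
  obtain ⟨-, Wd, Θ, hΘ, hWdne⟩ := htS
  apply subset_antisymm
  · rintro z ⟨x, hxL, rfl⟩
    exact hHO t ht x hxL
  · intro z hz
    rw [hOt t ht] at hz
    obtain ⟨c, rfl⟩ := hz
    obtain ⟨T, hTε, hTper, hTgen⟩ := hminper (y t)
    have hTpos : 0 < T := lt_of_lt_of_le hε₀pos hTε
    -- |Wd| ≥ T
    obtain ⟨k, hk⟩ := hTgen Wd (hlift_per t Wd Θ hΘ)
    have hk0 : k ≠ 0 := by
      intro h
      rw [h] at hk
      simp at hk
      exact hWdne hk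
    have habs : T ≤ |Wd| := by
      rw [hk, abs_mul, abs_of_pos hTpos]
      have h1 : (1:ℝ) ≤ |(k:ℝ)| := by
        rw [← Int.cast_abs]
        exact_mod_cast Int.one_le_abs hk0
      nlinarith [hTpos]
    -- reduce c mod T
    set m : ℤ := ⌊c / T⌋ with hm
    set c' : ℝ := c - m * T with hc'
    have hc'0 : 0 ≤ c' := by
      rw [hc']
      have h1 : (m : ℝ) ≤ c / T := Int.floor_le _
      have := mul_le_mul_of_nonneg_right h1 hTpos.le
      rw [div_mul_cancel₀ _ hTpos.ne'] at this
      linarith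
    have hc'T : c' < T := by
      rw [hc']
      have h2 : c / T < m + 1 := Int.lt_floor_add_one _
      have := mul_lt_mul_of_pos_right h2 hTpos
      rw [div_mul_cancel₀ _ hTpos.ne'] at this
      nlinarith
    have hφc' : φ (c', y t) = φ (c, y t) := by
      have hper' : φ (-(m * T : ℝ), y t) = y t := by
        rw [show (-(m * T : ℝ)) = ((-m : ℤ) : ℝ) * T by push_cast; ring]
        exact per_zsmul hzero hadd hTper (-m)
      rw [hc', sub_eq_add_neg, hadd, hper']
    -- pick the target value for the intermediate value theorem
    set τ : ℝ := if 0 ≤ Wd then c' else c' - T with hτ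
    have hφτ : φ (τ, y t) = φ (c, y t) := by
      rcases le_or_gt 0 Wd with h | h
      · rw [hτ, if_pos h, hφc']
      · rw [hτ, if_neg (not_le.mpr h)]
        rw [sub_eq_add_neg, hadd, show (-T : ℝ) = ((-1 : ℤ) : ℝ) * T by push_cast; ring]
        rw [per_zsmul hzero hadd hTper (-1)]
        exact hφc'
    have hτmem : τ ∈ uIcc (Θ 0) (Θ T₀) := by
      rw [hΘ.2.1, hΘ.2.2.1]
      rcases le_or_gt 0 Wd with h | h
      · rw [hτ, if_pos h]
        rw [abs_of_nonneg h] at habs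
        rw [uIcc_of_le (by linarith)]
        exact ⟨hc'0, by linarith⟩
      · rw [hτ, if_neg (not_le.mpr h)]
        rw [abs_of_neg h] at habs
        rw [uIcc_of_ge (by linarith)]
        constructor <;> [linarith; linarith]
    have hΘcont : ContinuousOn Θ (uIcc 0 T₀) := by
      rw [uIcc_of_le hT₀pos.le]
      exact hΘ.1
    obtain ⟨s', hs'mem, hs'⟩ := intermediate_value_uIcc hΘcont hτmem
    rw [uIcc_of_le hT₀pos.le] at hs'mem
    refine ⟨φ (s', x₀), hφsL s', ?_⟩
    show H (φ (s', x₀)) t = φ (c, y t)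
    have h11 := hΘ.2.2.2 s' hs'mem
    rw [hs', hφτ] at h11
    exact h11.symm
end
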